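/- arXiv:2207.00914 — 3 statements merged into one kernel-verified Lean document; each statement's English description precedes it below -/
import Mathlib

section
/- There exists a continuous function G : E → ℝ satisfying the kernel integral equation G(ξ,η) = G₀(ξ,η) + Φ_G(ξ,η) for all (ξ,η) ∈ E; namely, the successive approximations G_{n+1} := G₀ + Φ_{G_n} converge uniformly on E and their limit solves the equation. -/
open MeasureTheory intervalIntegral

/-- The domain `E = {(ξ,η) : 0 ≤ η ≤ 1, η ≤ ξ ≤ 2-η}`. -/
def Eset : Set (ℝ × ℝ) := {q | 0 ≤ q.2 ∧ q.2 ≤ 1 ∧ q.2 ≤ q.1 ∧ q.1 ≤ 2 - q.2}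

/-- `μ̃(ξ,η) = λ₀ - c₁((ξ+η)/2) + c₁((ξ-η)/2)`. -/
noncomputable def muT (c1 : ℝ → ℝ) (lam0 ξ η : ℝ) : ℝ :=
  lam0 - c1 ((ξ + η) / 2) + c1 ((ξ - η) / 2)

/-- The integral operator `Φ_H` of the kernel integral equation. -/
noncomputable def PhiOp (c1 : ℝ → ℝ) (lam0 : ℝ) (f : ℝ → ℝ → ℝ) (H : ℝ → ℝ → ℝ)
    (ξ η : ℝ) : ℝ :=
  (1 / 4) * (∫ τ in η..ξ, ∫ s in (0:ℝ)..η, muT c1 lam0 τ s * H τ s)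
    + (1 / 2) * (∫ τ in (0:ℝ)..η, ∫ s in (0:ℝ)..τ, muT c1 lam0 τ s * H τ s)
    + (1 / 4) * (∫ z in η..ξ, ∫ s in (0:ℝ)..η, ∫ τ in z..(z + η - s),
        f ((τ - s) / 2) (z - (τ + s) / 2) * H τ s)
    + (1 / 2) * (∫ z in (0:ℝ)..η, ∫ s in (0:ℝ)..z, ∫ τ in z..(2 * z - s),
        f ((τ - s) / 2) (z - (τ + s) / 2) * H τ s)

/-- The inhomogeneous term `G₀` of the kernel integral equation. -/
noncomputable def Gzero (lam0 : ℝ) (f : ℝ → ℝ → ℝ) (ξ η : ℝ) : ℝ :=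
  lam0 / 4 * (ξ + η)
    + (1 / 4) * (∫ τ in η..ξ, ∫ s in (0:ℝ)..η, f ((τ + s) / 2) ((τ - s) / 2))
    + (1 / 2) * (∫ τ in (0:ℝ)..η, ∫ s in (0:ℝ)..τ, f ((τ + s) / 2) ((τ - s) / 2))

set_option maxHeartbeats 1000000

namespace Stmt15Aux

open Set Real

noncomputable def clamp01 (x : ℝ) : ℝ := max 0 (min 1 x)

lemma clamp01_nonneg (x : ℝ) : 0 ≤ clamp01 x := le_max_left _ _

lemma clamp01_le_one (x : ℝ) : clamp01 x ≤ 1 := max_le zero_le_one (min_le_left _ _)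

lemma clamp01_mem (x : ℝ) : clamp01 x ∈ Icc (0:ℝ) 1 := ⟨clamp01_nonneg x, clamp01_le_one x⟩

lemma clamp01_eq {x : ℝ} (h0 : 0 ≤ x) (h1 : x ≤ 1) : clamp01 x = x := by
  unfold clamp01; rw [min_eq_right h1, max_eq_right h0]

lemma clamp01_idem (x : ℝ) : clamp01 (clamp01 x) = clamp01 x :=
  clamp01_eq (clamp01_nonneg x) (clamp01_le_one x)

lemma continuous_clamp01 : Continuous clamp01 :=
  continuous_const.max (continuous_const.min continuous_id)

noncomputable def retr (p : ℝ × ℝ) : ℝ × ℝ :=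
  (max (clamp01 p.2) (min (2 - clamp01 p.2) p.1), clamp01 p.2)

lemma retr_mem (p : ℝ × ℝ) : retr p ∈ Eset := by
  refine ⟨clamp01_nonneg _, clamp01_le_one _, le_max_left _ _, ?_⟩
  apply max_le
  · simp only [retr]
    linarith [clamp01_le_one p.2]
  · simp only [retr]
    exact min_le_left _ _

lemma retr_eq {p : ℝ × ℝ} (h : p ∈ Eset) : retr p = p := by
  obtain ⟨h0, h1, h2, h3⟩ := h
  unfold retr
  rw [clamp01_eq h0 h1, min_eq_right h3, max_eq_right h2]

lemma continuous_retr : Continuous retr := by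
  unfold retr
  exact ((continuous_clamp01.comp continuous_snd).max
    (((continuous_const.sub (continuous_clamp01.comp continuous_snd)).min continuous_fst))).prodMk
    (continuous_clamp01.comp continuous_snd)

lemma retr_snd (p : ℝ × ℝ) : (retr p).2 = clamp01 p.2 := rfl

lemma isClosed_Eset : IsClosed Eset := by
  have : Eset = {q : ℝ × ℝ | 0 ≤ q.2} ∩ ({q | q.2 ≤ 1} ∩ ({q | q.2 ≤ q.1} ∩ {q | q.1 ≤ 2 - q.2})) := by
    ext q; simp [Eset, Set.mem_setOf_eq, and_assoc]
  rw [this]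
  exact (isClosed_le continuous_const continuous_snd).inter
    ((isClosed_le continuous_snd continuous_const).inter
      ((isClosed_le continuous_snd continuous_fst).inter
        (isClosed_le continuous_fst (continuous_const.sub continuous_snd))))

lemma isCompact_Eset : IsCompact Eset := by
  refine IsCompact.of_isClosed_subset (isCompact_Icc (a := ((0:ℝ), (0:ℝ))) (b := ((2:ℝ), (1:ℝ))))
    isClosed_Eset ?_
  rintro ⟨x, y⟩ ⟨h0, h1, h2, h3⟩
  simp only [Set.mem_Icc, Prod.le_def]
  refine ⟨⟨?_, ?_⟩, ?_, ?_⟩ <;> simp at * <;> linarith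

/-- continuity of a parametric interval integral with both endpoints varying. -/
lemma cont_param_both {X : Type*} [TopologicalSpace X] {F : X → ℝ → ℝ}
    (hF : Continuous (Function.uncurry F)) {e1 e2 : X → ℝ}
    (h1 : Continuous e1) (h2 : Continuous e2) :
    Continuous fun x => ∫ t in e1 x..e2 x, F x t := by
  have hi : ∀ (x : X) (a b : ℝ), IntervalIntegrable (F x) volume a b := by
    intro x a b
    have : Continuous (F x) := hF.comp (continuous_const.prodMk continuous_id)
    exact this.intervalIntegrable a b
  have key : ∀ x, (∫ t in (0:ℝ)..e2 x, F x t) - (∫ t in (0:ℝ)..e1 x, F x t)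
      = ∫ t in e1 x..e2 x, F x t := by
    intro x
    rw [← intervalIntegral.integral_add_adjacent_intervals (hi x 0 (e1 x)) (hi x (e1 x) (e2 x))]
    ring
  exact Continuous.congr
    ((continuous_parametric_intervalIntegral_of_continuous hF h2).sub
      (continuous_parametric_intervalIntegral_of_continuous hF h1)) key

lemma integral_exp_mul {K : ℝ} (hK : K ≠ 0) (a : ℝ) :
    ∫ s in (0:ℝ)..a, Real.exp (K * s) = (Real.exp (K * a) - 1) / K := by
  have h : ∀ s ∈ Set.uIcc (0:ℝ) a,
      HasDerivAt (fun t => Real.exp (K * t) / K) (Real.exp (K * s)) s := by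
    intro s _
    have h1 : HasDerivAt (fun t : ℝ => K * t) K s := by
      simpa using (hasDerivAt_id s).const_mul K
    have h2 : HasDerivAt (fun t : ℝ => Real.exp (K * t)) (Real.exp (K * s) * K) s :=
      (Real.hasDerivAt_exp (K * s)).comp s h1
    have := h2.div_const K
    simpa [mul_div_assoc, mul_div_cancel_right₀ _ hK] using this
  rw [intervalIntegral.integral_eq_sub_of_hasDerivAt h
    ((Real.continuous_exp.comp (continuous_const.mul continuous_id)).intervalIntegrable 0 a)]
  simp [Real.exp_zero]
  ring

/-- weighted bound on an integral -/
lemma wbound {F : ℝ → ℝ} {c K a : ℝ}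
    (hF : ∀ s ∈ Set.uIoc (0:ℝ) a, |F s| ≤ c * Real.exp (K * s))
    (hc : 0 ≤ c) (hK : 0 < K) (ha : 0 ≤ a) :
    |∫ s in (0:ℝ)..a, F s| ≤ c * Real.exp (K * a) / K := by
  have hb : IntervalIntegrable (fun s => c * Real.exp (K * s)) volume 0 a :=
    (continuous_const.mul (Real.continuous_exp.comp (continuous_const.mul continuous_id))).intervalIntegrable 0 a
  have h1 : ‖∫ s in (0:ℝ)..a, F s‖ ≤ |∫ s in (0:ℝ)..a, c * Real.exp (K * s)| := by
    apply intervalIntegral.norm_integral_le_abs_of_norm_le _ hb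
    refine (ae_restrict_iff' measurableSet_uIoc).2 (Filter.Eventually.of_forall ?_)
    intro s hs
    simpa [Real.norm_eq_abs] using hF s hs
  have h2 : (∫ s in (0:ℝ)..a, c * Real.exp (K * s)) = c * ((Real.exp (K * a) - 1) / K) := by
    rw [intervalIntegral.integral_const_mul, integral_exp_mul hK.ne']
  have hexp : 1 ≤ Real.exp (K * a) := Real.one_le_exp (by positivity)
  rw [Real.norm_eq_abs] at h1
  calc |∫ s in (0:ℝ)..a, F s| ≤ |∫ s in (0:ℝ)..a, c * Real.exp (K * s)| := h1
    _ = c * ((Real.exp (K * a) - 1) / K) := by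
        rw [h2, abs_of_nonneg]
        have : (0:ℝ) ≤ Real.exp (K * a) - 1 := by linarith
        positivity
    _ ≤ c * Real.exp (K * a) / K := by
        rw [mul_div_assoc]
        gcongr
        linarith

/-- constant bound on an integral over an ordered interval -/
lemma cbound {F : ℝ → ℝ} {c a b : ℝ} (hab : a ≤ b)
    (hF : ∀ s ∈ Set.uIoc a b, |F s| ≤ c) :
    |∫ s in a..b, F s| ≤ c * (b - a) := by
  have := intervalIntegral.norm_integral_le_of_norm_le_const (f := F) (C := c) (a := a) (b := b)
    (by intro x hx; simpa [Real.norm_eq_abs] using hF x hx)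
  rw [Real.norm_eq_abs] at this
  calc |∫ s in a..b, F s| ≤ c * |b - a| := this
    _ = c * (b - a) := by rw [abs_of_nonneg (by linarith)]

lemma contI {X : Type*} [TopologicalSpace X] (F : X → ℝ → ℝ)
    (hF : Continuous fun q : X × ℝ => F q.1 q.2) (e : X → ℝ) (he : Continuous e) :
    Continuous fun x => ∫ s in (0:ℝ)..e x, F x s := by
  apply continuous_parametric_intervalIntegral_of_continuous (f := F) (s := e) ?_ he
  exact hF

lemma cont_param_both' {X : Type*} [TopologicalSpace X] (F : X → ℝ → ℝ)
    (hF : Continuous fun q : X × ℝ => F q.1 q.2) {e1 e2 : X → ℝ}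
    (h1 : Continuous e1) (h2 : Continuous e2) :
    Continuous fun x => ∫ t in e1 x..e2 x, F x t :=
  cont_param_both hF h1 h2


lemma cont_muT {c : ℝ → ℝ} {lam0 : ℝ} (hc : Continuous c) :
    Continuous fun q : ℝ × ℝ => muT c lam0 q.1 q.2 := by
  unfold muT; fun_prop

lemma contD1 (F : ℝ → ℝ → ℝ) (hF : Continuous fun q : ℝ × ℝ => F q.1 q.2) :
    Continuous fun q : ℝ × ℝ => ∫ τ in q.2..q.1, ∫ s in (0:ℝ)..q.2, F τ s :=
  cont_param_both' (fun (q : ℝ × ℝ) τ => ∫ s in (0:ℝ)..q.2, F τ s)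
    (contI (fun (w : (ℝ × ℝ) × ℝ) s => F w.2 s)
      (hF.comp (continuous_fst.snd.prodMk continuous_snd))
      (fun w => w.1.2) continuous_fst.snd)
    continuous_snd continuous_fst

lemma contD2 (F : ℝ → ℝ → ℝ) (hF : Continuous fun q : ℝ × ℝ => F q.1 q.2) :
    Continuous fun q : ℝ × ℝ => ∫ τ in (0:ℝ)..q.2, ∫ s in (0:ℝ)..τ, F τ s :=
  contI (fun (q : ℝ × ℝ) τ => ∫ s in (0:ℝ)..τ, F τ s)
    (contI (fun (w : (ℝ × ℝ) × ℝ) s => F w.2 s)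
      (hF.comp (continuous_fst.snd.prodMk continuous_snd))
      (fun w => w.2) continuous_snd)
    (fun q => q.2) continuous_snd

lemma contT3 (F : ℝ → ℝ → ℝ → ℝ)
    (hF : Continuous fun w : ℝ × ℝ × ℝ => F w.1 w.2.1 w.2.2) :
    Continuous fun q : ℝ × ℝ =>
      ∫ z in q.2..q.1, ∫ s in (0:ℝ)..q.2, ∫ τ in z..(z + q.2 - s), F z s τ :=
  cont_param_both' (fun (q : ℝ × ℝ) z => ∫ s in (0:ℝ)..q.2, ∫ τ in z..(z + q.2 - s), F z s τ)
    (contI (fun (v : (ℝ × ℝ) × ℝ) s => ∫ τ in v.2..(v.2 + v.1.2 - s), F v.2 s τ)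
      (cont_param_both' (fun (u : ((ℝ × ℝ) × ℝ) × ℝ) τ => F u.1.2 u.2 τ)
        (hF.comp ((continuous_fst.fst.snd).prodMk
          ((continuous_fst.snd).prodMk continuous_snd)))
        continuous_fst.snd (by fun_prop))
      (fun v => v.1.2) continuous_fst.snd)
    continuous_snd continuous_fst

lemma contT4 (F : ℝ → ℝ → ℝ → ℝ)
    (hF : Continuous fun w : ℝ × ℝ × ℝ => F w.1 w.2.1 w.2.2) :
    Continuous fun q : ℝ × ℝ =>
      ∫ z in (0:ℝ)..q.2, ∫ s in (0:ℝ)..z, ∫ τ in z..(2 * z - s), F z s τ :=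
  contI (fun (q : ℝ × ℝ) z => ∫ s in (0:ℝ)..z, ∫ τ in z..(2 * z - s), F z s τ)
    (contI (fun (v : (ℝ × ℝ) × ℝ) s => ∫ τ in v.2..(2 * v.2 - s), F v.2 s τ)
      (cont_param_both' (fun (u : ((ℝ × ℝ) × ℝ) × ℝ) τ => F u.1.2 u.2 τ)
        (hF.comp ((continuous_fst.fst.snd).prodMk
          ((continuous_fst.snd).prodMk continuous_snd)))
        continuous_fst.snd (by fun_prop))
      (fun v => v.2) continuous_snd)
    (fun q => q.2) continuous_snd

lemma cont_PhiOp {c : ℝ → ℝ} {lam0 : ℝ} {f H : ℝ → ℝ → ℝ} (hc : Continuous c)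
    (hf : Continuous fun q : ℝ × ℝ => f q.1 q.2)
    (hH : Continuous fun q : ℝ × ℝ => H q.1 q.2) :
    Continuous fun q : ℝ × ℝ => PhiOp c lam0 f H q.1 q.2 := by
  have hmu := cont_muT (lam0 := lam0) hc
  have hjoint : Continuous fun q : ℝ × ℝ => muT c lam0 q.1 q.2 * H q.1 q.2 := hmu.mul hH
  have hjoint3 : Continuous fun w : ℝ × ℝ × ℝ =>
      f ((w.2.2 - w.2.1) / 2) (w.1 - (w.2.2 + w.2.1) / 2) * H w.2.2 w.2.1 := by fun_prop
  have h1 := contD1 (fun x y => muT c lam0 x y * H x y) hjoint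
  have h2 := contD2 (fun x y => muT c lam0 x y * H x y) hjoint
  have h3 := contT3 (fun z s τ => f ((τ - s) / 2) (z - (τ + s) / 2) * H τ s) hjoint3
  have h4 := contT4 (fun z s τ => f ((τ - s) / 2) (z - (τ + s) / 2) * H τ s) hjoint3
  unfold PhiOp
  exact (((continuous_const.mul h1).add (continuous_const.mul h2)).add
    (continuous_const.mul h3)).add (continuous_const.mul h4)

lemma cont_Gzero {lam0 : ℝ} {f : ℝ → ℝ → ℝ}
    (hf : Continuous fun q : ℝ × ℝ => f q.1 q.2) :
    Continuous fun q : ℝ × ℝ => Gzero lam0 f q.1 q.2 := by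
  have hjoint : Continuous fun q : ℝ × ℝ => f ((q.1 + q.2) / 2) ((q.1 - q.2) / 2) := by fun_prop
  have h1 := contD1 (fun τ s => f ((τ + s) / 2) ((τ - s) / 2)) hjoint
  have h2 := contD2 (fun τ s => f ((τ + s) / 2) ((τ - s) / 2)) hjoint
  unfold Gzero
  exact ((continuous_const.mul (continuous_fst.add continuous_snd)).add
    (continuous_const.mul h1)).add (continuous_const.mul h2)


lemma phi_sub (c : ℝ → ℝ) (lam0 : ℝ) (f H1 H2 : ℝ → ℝ → ℝ) (hc : Continuous c)
    (hf : Continuous fun q : ℝ × ℝ => f q.1 q.2)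
    (h1 : Continuous fun q : ℝ × ℝ => H1 q.1 q.2)
    (h2 : Continuous fun q : ℝ × ℝ => H2 q.1 q.2) (ξ η : ℝ) :
    PhiOp c lam0 f H1 ξ η - PhiOp c lam0 f H2 ξ η
      = PhiOp c lam0 f (fun x y => H1 x y - H2 x y) ξ η := by
  have j1 : Continuous fun q : ℝ × ℝ => muT c lam0 q.1 q.2 * H1 q.1 q.2 := by
    unfold muT; fun_prop
  have j2 : Continuous fun q : ℝ × ℝ => muT c lam0 q.1 q.2 * H2 q.1 q.2 := by
    unfold muT; fun_prop
  -- level-1 (scalar) continuity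
  have b1 : ∀ τ : ℝ, Continuous fun s : ℝ => muT c lam0 τ s * H1 τ s := by
    intro τ; unfold muT; fun_prop
  have b2 : ∀ τ : ℝ, Continuous fun s : ℝ => muT c lam0 τ s * H2 τ s := by
    intro τ; unfold muT; fun_prop
  have r1 : ∀ z s : ℝ, Continuous fun τ : ℝ =>
      f ((τ - s) / 2) (z - (τ + s) / 2) * H1 τ s := by intro z s; fun_prop
  have r2 : ∀ z s : ℝ, Continuous fun τ : ℝ =>
      f ((τ - s) / 2) (z - (τ + s) / 2) * H2 τ s := by intro z s; fun_prop
  -- level-2 continuity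
  have a1 : ∀ b : ℝ, Continuous fun τ : ℝ => ∫ s in (0:ℝ)..b, muT c lam0 τ s * H1 τ s :=
    fun b => contI (fun τ s => muT c lam0 τ s * H1 τ s) j1 (fun _ => b) continuous_const
  have a2 : ∀ b : ℝ, Continuous fun τ : ℝ => ∫ s in (0:ℝ)..b, muT c lam0 τ s * H2 τ s :=
    fun b => contI (fun τ s => muT c lam0 τ s * H2 τ s) j2 (fun _ => b) continuous_const
  have a1' : Continuous fun τ : ℝ => ∫ s in (0:ℝ)..τ, muT c lam0 τ s * H1 τ s :=
    contI (fun τ s => muT c lam0 τ s * H1 τ s) j1 (fun τ => τ) continuous_id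
  have a2' : Continuous fun τ : ℝ => ∫ s in (0:ℝ)..τ, muT c lam0 τ s * H2 τ s :=
    contI (fun τ s => muT c lam0 τ s * H2 τ s) j2 (fun τ => τ) continuous_id
  have n1 : ∀ b z : ℝ, Continuous fun s : ℝ => ∫ τ in z..(z + b - s),
      f ((τ - s) / 2) (z - (τ + s) / 2) * H1 τ s := fun b z =>
    cont_param_both' (fun s τ => f ((τ - s) / 2) (z - (τ + s) / 2) * H1 τ s)
      (by fun_prop) continuous_const (by fun_prop)
  have n2 : ∀ b z : ℝ, Continuous fun s : ℝ => ∫ τ in z..(z + b - s),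
      f ((τ - s) / 2) (z - (τ + s) / 2) * H2 τ s := fun b z =>
    cont_param_both' (fun s τ => f ((τ - s) / 2) (z - (τ + s) / 2) * H2 τ s)
      (by fun_prop) continuous_const (by fun_prop)
  have q1 : ∀ z : ℝ, Continuous fun s : ℝ => ∫ τ in z..(2 * z - s),
      f ((τ - s) / 2) (z - (τ + s) / 2) * H1 τ s := fun z =>
    cont_param_both' (fun s τ => f ((τ - s) / 2) (z - (τ + s) / 2) * H1 τ s)
      (by fun_prop) continuous_const (by fun_prop)
  have q2 : ∀ z : ℝ, Continuous fun s : ℝ => ∫ τ in z..(2 * z - s),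
      f ((τ - s) / 2) (z - (τ + s) / 2) * H2 τ s := fun z =>
    cont_param_both' (fun s τ => f ((τ - s) / 2) (z - (τ + s) / 2) * H2 τ s)
      (by fun_prop) continuous_const (by fun_prop)
  -- level-3 continuity
  have m1 : ∀ b : ℝ, Continuous fun z : ℝ => ∫ s in (0:ℝ)..b, ∫ τ in z..(z + b - s),
      f ((τ - s) / 2) (z - (τ + s) / 2) * H1 τ s := fun b =>
    contI (fun z s => ∫ τ in z..(z + b - s), f ((τ - s) / 2) (z - (τ + s) / 2) * H1 τ s)
      (cont_param_both' (fun v : ℝ × ℝ => fun τ => f ((τ - v.2) / 2) (v.1 - (τ + v.2) / 2) * H1 τ v.2)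
        (by fun_prop) (by fun_prop) (by fun_prop))
      (fun _ => b) continuous_const
  have m2 : ∀ b : ℝ, Continuous fun z : ℝ => ∫ s in (0:ℝ)..b, ∫ τ in z..(z + b - s),
      f ((τ - s) / 2) (z - (τ + s) / 2) * H2 τ s := fun b =>
    contI (fun z s => ∫ τ in z..(z + b - s), f ((τ - s) / 2) (z - (τ + s) / 2) * H2 τ s)
      (cont_param_both' (fun v : ℝ × ℝ => fun τ => f ((τ - v.2) / 2) (v.1 - (τ + v.2) / 2) * H2 τ v.2)
        (by fun_prop) (by fun_prop) (by fun_prop))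
      (fun _ => b) continuous_const
  have p1 : Continuous fun z : ℝ => ∫ s in (0:ℝ)..z, ∫ τ in z..(2 * z - s),
      f ((τ - s) / 2) (z - (τ + s) / 2) * H1 τ s :=
    contI (fun z s => ∫ τ in z..(2 * z - s), f ((τ - s) / 2) (z - (τ + s) / 2) * H1 τ s)
      (cont_param_both' (fun v : ℝ × ℝ => fun τ => f ((τ - v.2) / 2) (v.1 - (τ + v.2) / 2) * H1 τ v.2)
        (by fun_prop) (by fun_prop) (by fun_prop))
      (fun z => z) continuous_id
  have p2 : Continuous fun z : ℝ => ∫ s in (0:ℝ)..z, ∫ τ in z..(2 * z - s),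
      f ((τ - s) / 2) (z - (τ + s) / 2) * H2 τ s :=
    contI (fun z s => ∫ τ in z..(2 * z - s), f ((τ - s) / 2) (z - (τ + s) / 2) * H2 τ s)
      (cont_param_both' (fun v : ℝ × ℝ => fun τ => f ((τ - v.2) / 2) (v.1 - (τ + v.2) / 2) * H2 τ v.2)
        (by fun_prop) (by fun_prop) (by fun_prop))
      (fun z => z) continuous_id
  have e1 : (∫ τ in η..ξ, ∫ s in (0:ℝ)..η, muT c lam0 τ s * H1 τ s)
      - (∫ τ in η..ξ, ∫ s in (0:ℝ)..η, muT c lam0 τ s * H2 τ s)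
      = ∫ τ in η..ξ, ∫ s in (0:ℝ)..η, muT c lam0 τ s * (H1 τ s - H2 τ s) := by
    rw [← intervalIntegral.integral_sub ((a1 η).intervalIntegrable η ξ)
      ((a2 η).intervalIntegrable η ξ)]
    apply intervalIntegral.integral_congr
    intro τ _
    dsimp only
    rw [← intervalIntegral.integral_sub ((b1 τ).intervalIntegrable 0 η)
      ((b2 τ).intervalIntegrable 0 η)]
    apply intervalIntegral.integral_congr
    intro s _
    dsimp only
    ring
  have e2 : (∫ τ in (0:ℝ)..η, ∫ s in (0:ℝ)..τ, muT c lam0 τ s * H1 τ s)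
      - (∫ τ in (0:ℝ)..η, ∫ s in (0:ℝ)..τ, muT c lam0 τ s * H2 τ s)
      = ∫ τ in (0:ℝ)..η, ∫ s in (0:ℝ)..τ, muT c lam0 τ s * (H1 τ s - H2 τ s) := by
    rw [← intervalIntegral.integral_sub (a1'.intervalIntegrable 0 η)
      (a2'.intervalIntegrable 0 η)]
    apply intervalIntegral.integral_congr
    intro τ _
    dsimp only
    rw [← intervalIntegral.integral_sub ((b1 τ).intervalIntegrable 0 τ)
      ((b2 τ).intervalIntegrable 0 τ)]
    apply intervalIntegral.integral_congr
    intro s _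
    dsimp only
    ring
  have e3 : (∫ z in η..ξ, ∫ s in (0:ℝ)..η, ∫ τ in z..(z + η - s),
        f ((τ - s) / 2) (z - (τ + s) / 2) * H1 τ s)
      - (∫ z in η..ξ, ∫ s in (0:ℝ)..η, ∫ τ in z..(z + η - s),
        f ((τ - s) / 2) (z - (τ + s) / 2) * H2 τ s)
      = ∫ z in η..ξ, ∫ s in (0:ℝ)..η, ∫ τ in z..(z + η - s),
        f ((τ - s) / 2) (z - (τ + s) / 2) * (H1 τ s - H2 τ s) := by
    rw [← intervalIntegral.integral_sub ((m1 η).intervalIntegrable η ξ)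
      ((m2 η).intervalIntegrable η ξ)]
    apply intervalIntegral.integral_congr
    intro z _
    dsimp only
    rw [← intervalIntegral.integral_sub ((n1 η z).intervalIntegrable 0 η)
      ((n2 η z).intervalIntegrable 0 η)]
    apply intervalIntegral.integral_congr
    intro s _
    dsimp only
    rw [← intervalIntegral.integral_sub ((r1 z s).intervalIntegrable z (z + η - s))
      ((r2 z s).intervalIntegrable z (z + η - s))]
    apply intervalIntegral.integral_congr
    intro τ _
    dsimp only
    ring
  have e4 : (∫ z in (0:ℝ)..η, ∫ s in (0:ℝ)..z, ∫ τ in z..(2 * z - s),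
        f ((τ - s) / 2) (z - (τ + s) / 2) * H1 τ s)
      - (∫ z in (0:ℝ)..η, ∫ s in (0:ℝ)..z, ∫ τ in z..(2 * z - s),
        f ((τ - s) / 2) (z - (τ + s) / 2) * H2 τ s)
      = ∫ z in (0:ℝ)..η, ∫ s in (0:ℝ)..z, ∫ τ in z..(2 * z - s),
        f ((τ - s) / 2) (z - (τ + s) / 2) * (H1 τ s - H2 τ s) := by
    rw [← intervalIntegral.integral_sub (p1.intervalIntegrable 0 η)
      (p2.intervalIntegrable 0 η)]
    apply intervalIntegral.integral_congr
    intro z _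
    dsimp only
    rw [← intervalIntegral.integral_sub ((q1 z).intervalIntegrable 0 z)
      ((q2 z).intervalIntegrable 0 z)]
    apply intervalIntegral.integral_congr
    intro s _
    dsimp only
    rw [← intervalIntegral.integral_sub ((r1 z s).intervalIntegrable z (2 * z - s))
      ((r2 z s).intervalIntegrable z (2 * z - s))]
    apply intervalIntegral.integral_congr
    intro τ _
    dsimp only
    ring
  unfold PhiOp
  linarith [e1, e2, e3, e4]

lemma phi_bound (c : ℝ → ℝ) (lam0 : ℝ) (f D : ℝ → ℝ → ℝ) {C K M Fb : ℝ}
    (hM : ∀ x y, |muT c lam0 x y| ≤ M) (hFb : ∀ x y, |f x y| ≤ Fb)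
    (hD : ∀ x y, |D x y| ≤ C * Real.exp (K * clamp01 y))
    (hC : 0 ≤ C) (hK : 0 < K) {ξ η : ℝ} (hq : (ξ, η) ∈ Eset) :
    |PhiOp c lam0 f D ξ η| ≤ (M + Fb) * C * Real.exp (K * η) / K := by
  obtain ⟨h0, h1, h2, h3⟩ : 0 ≤ η ∧ η ≤ 1 ∧ η ≤ ξ ∧ ξ ≤ 2 - η := hq
  have hM0 : 0 ≤ M := le_trans (abs_nonneg _) (hM 0 0)
  have hF0 : 0 ≤ Fb := le_trans (abs_nonneg _) (hFb 0 0)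
  have hDs : ∀ x s : ℝ, 0 ≤ s → s ≤ 1 → |D x s| ≤ C * Real.exp (K * s) := by
    intro x s hs0 hs1
    have := hD x s
    rwa [clamp01_eq hs0 hs1] at this
  -- Term 1
  have t1 : |∫ τ in η..ξ, ∫ s in (0:ℝ)..η, muT c lam0 τ s * D τ s|
      ≤ (M * C * Real.exp (K * η) / K) * (ξ - η) := by
    apply cbound h2
    intro τ _
    apply wbound _ (by positivity) hK h0
    intro s hs
    rw [Set.uIoc_of_le h0] at hs
    calc |muT c lam0 τ s * D τ s| = |muT c lam0 τ s| * |D τ s| := abs_mul _ _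
      _ ≤ M * (C * Real.exp (K * s)) :=
          mul_le_mul (hM τ s) (hDs τ s hs.1.le (hs.2.trans h1)) (abs_nonneg _) hM0
      _ = M * C * Real.exp (K * s) := by ring
  -- Term 2
  have t2 : |∫ τ in (0:ℝ)..η, ∫ s in (0:ℝ)..τ, muT c lam0 τ s * D τ s|
      ≤ (M * C * Real.exp (K * η) / K) * (η - 0) := by
    apply cbound h0
    intro τ hτ
    rw [Set.uIoc_of_le h0] at hτ
    have bτ : |∫ s in (0:ℝ)..τ, muT c lam0 τ s * D τ s|
        ≤ M * C * Real.exp (K * τ) / K := by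
      apply wbound _ (by positivity) hK hτ.1.le
      intro s hs
      rw [Set.uIoc_of_le hτ.1.le] at hs
      calc |muT c lam0 τ s * D τ s| = |muT c lam0 τ s| * |D τ s| := abs_mul _ _
        _ ≤ M * (C * Real.exp (K * s)) :=
            mul_le_mul (hM τ s) (hDs τ s hs.1.le ((hs.2.trans hτ.2).trans h1))
              (abs_nonneg _) hM0
        _ = M * C * Real.exp (K * s) := by ring
    refine bτ.trans ?_
    gcongr
    exact hτ.2
  -- Term 3
  have t3 : |∫ z in η..ξ, ∫ s in (0:ℝ)..η, ∫ τ in z..(z + η - s),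
        f ((τ - s) / 2) (z - (τ + s) / 2) * D τ s|
      ≤ (Fb * C * Real.exp (K * η) / K) * (ξ - η) := by
    apply cbound h2
    intro z _
    apply wbound _ (by positivity) hK h0
    intro s hs
    rw [Set.uIoc_of_le h0] at hs
    have hinner : |∫ τ in z..(z + η - s), f ((τ - s) / 2) (z - (τ + s) / 2) * D τ s|
        ≤ (Fb * (C * Real.exp (K * s))) * ((z + η - s) - z) := by
      apply cbound (by linarith [hs.2])
      intro τ _
      calc |f ((τ - s) / 2) (z - (τ + s) / 2) * D τ s|
          = |f ((τ - s) / 2) (z - (τ + s) / 2)| * |D τ s| := abs_mul _ _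
        _ ≤ Fb * (C * Real.exp (K * s)) :=
            mul_le_mul (hFb _ _) (hDs τ s hs.1.le (hs.2.trans h1)) (abs_nonneg _) hF0
    refine hinner.trans ?_
    have h9 : (z + η - s) - z = η - s := by ring
    rw [h9]
    have h10 : η - s ≤ 1 := by linarith [hs.1]
    nlinarith [Real.exp_pos (K * s), mul_le_mul_of_nonneg_left h10
      (show (0:ℝ) ≤ Fb * (C * Real.exp (K * s)) by positivity)]
  -- Term 4
  have t4 : |∫ z in (0:ℝ)..η, ∫ s in (0:ℝ)..z, ∫ τ in z..(2 * z - s),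
        f ((τ - s) / 2) (z - (τ + s) / 2) * D τ s|
      ≤ (Fb * C * Real.exp (K * η) / K) * (η - 0) := by
    apply cbound h0
    intro z hz
    rw [Set.uIoc_of_le h0] at hz
    have bz : |∫ s in (0:ℝ)..z, ∫ τ in z..(2 * z - s),
        f ((τ - s) / 2) (z - (τ + s) / 2) * D τ s|
        ≤ Fb * C * Real.exp (K * z) / K := by
      apply wbound _ (by positivity) hK hz.1.le
      intro s hs
      rw [Set.uIoc_of_le hz.1.le] at hs
      have hinner : |∫ τ in z..(2 * z - s), f ((τ - s) / 2) (z - (τ + s) / 2) * D τ s|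
          ≤ (Fb * (C * Real.exp (K * s))) * ((2 * z - s) - z) := by
        apply cbound (by linarith [hs.2])
        intro τ _
        calc |f ((τ - s) / 2) (z - (τ + s) / 2) * D τ s|
            = |f ((τ - s) / 2) (z - (τ + s) / 2)| * |D τ s| := abs_mul _ _
          _ ≤ Fb * (C * Real.exp (K * s)) :=
              mul_le_mul (hFb _ _) (hDs τ s hs.1.le ((hs.2.trans hz.2).trans h1))
                (abs_nonneg _) hF0
      refine hinner.trans ?_
      have h9 : (2 * z - s) - z = z - s := by ring
      rw [h9]
      have h10 : z - s ≤ 1 := by linarith [hs.1, hz.2]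
      nlinarith [Real.exp_pos (K * s), mul_le_mul_of_nonneg_left h10
        (show (0:ℝ) ≤ Fb * (C * Real.exp (K * s)) by positivity)]
    refine bz.trans ?_
    gcongr
    exact hz.2
  -- combine
  have hξη : ξ - η ≤ 2 := by linarith
  have hpos1 : (0:ℝ) ≤ M * C * Real.exp (K * η) / K := by positivity
  have hpos2 : (0:ℝ) ≤ Fb * C * Real.exp (K * η) / K := by positivity
  have t1' := t1.trans (mul_le_mul_of_nonneg_left hξη hpos1)
  have t2' := t2.trans (by nlinarith : (M * C * Real.exp (K * η) / K) * (η - 0)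
    ≤ M * C * Real.exp (K * η) / K)
  have t3' := t3.trans (mul_le_mul_of_nonneg_left hξη hpos2)
  have t4' := t4.trans (by nlinarith : (Fb * C * Real.exp (K * η) / K) * (η - 0)
    ≤ Fb * C * Real.exp (K * η) / K)
  unfold PhiOp
  set A := ∫ τ in η..ξ, ∫ s in (0:ℝ)..η, muT c lam0 τ s * D τ s with hA
  set B := ∫ τ in (0:ℝ)..η, ∫ s in (0:ℝ)..τ, muT c lam0 τ s * D τ s with hB
  set A3 := ∫ z in η..ξ, ∫ s in (0:ℝ)..η, ∫ τ in z..(z + η - s),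
    f ((τ - s) / 2) (z - (τ + s) / 2) * D τ s with hA3
  set A4 := ∫ z in (0:ℝ)..η, ∫ s in (0:ℝ)..z, ∫ τ in z..(2 * z - s),
    f ((τ - s) / 2) (z - (τ + s) / 2) * D τ s with hA4
  have habs : |1 / 4 * A + 1 / 2 * B + 1 / 4 * A3 + 1 / 2 * A4|
      ≤ 1 / 4 * |A| + 1 / 2 * |B| + 1 / 4 * |A3| + 1 / 2 * |A4| := by
    have g1 := abs_add_le (1 / 4 * A + 1 / 2 * B + 1 / 4 * A3) (1 / 2 * A4)
    have g2 := abs_add_le (1 / 4 * A + 1 / 2 * B) (1 / 4 * A3)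
    have g3 := abs_add_le (1 / 4 * A) (1 / 2 * B)
    have m1 : |1 / 4 * A| = 1 / 4 * |A| := by rw [abs_mul]; norm_num
    have m2 : |1 / 2 * B| = 1 / 2 * |B| := by rw [abs_mul]; norm_num
    have m3 : |1 / 4 * A3| = 1 / 4 * |A3| := by rw [abs_mul]; norm_num
    have m4 : |1 / 2 * A4| = 1 / 2 * |A4| := by rw [abs_mul]; norm_num
    linarith
  refine habs.trans ?_
  have hr : 1 / 4 * (M * C * Real.exp (K * η) / K * 2)
      + 1 / 2 * (M * C * Real.exp (K * η) / K)
      + 1 / 4 * (Fb * C * Real.exp (K * η) / K * 2)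
      + 1 / 2 * (Fb * C * Real.exp (K * η) / K)
      = (M + Fb) * C * Real.exp (K * η) / K := by ring
  linarith [t1', t2', t3', t4']

lemma phi_congr (c : ℝ → ℝ) (lam0 : ℝ) (f H : ℝ → ℝ → ℝ) {ξ η : ℝ} (hq : (ξ, η) ∈ Eset) :
    PhiOp (fun x => c (clamp01 x)) lam0 f H ξ η = PhiOp c lam0 f H ξ η := by
  obtain ⟨h0, h1, h2, h3⟩ : 0 ≤ η ∧ η ≤ 1 ∧ η ≤ ξ ∧ ξ ≤ 2 - η := hq
  have e1 : (∫ τ in η..ξ, ∫ s in (0:ℝ)..η, muT (fun x => c (clamp01 x)) lam0 τ s * H τ s)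
      = ∫ τ in η..ξ, ∫ s in (0:ℝ)..η, muT c lam0 τ s * H τ s := by
    apply intervalIntegral.integral_congr
    intro τ hτ
    rw [Set.uIcc_of_le h2] at hτ
    dsimp only
    apply intervalIntegral.integral_congr
    intro s hs
    rw [Set.uIcc_of_le h0] at hs
    dsimp only
    unfold muT
    beta_reduce
    rw [clamp01_eq (by linarith [hτ.1, hs.1] : (0:ℝ) ≤ (τ + s) / 2)
        (by linarith [hτ.2, hs.2] : (τ + s) / 2 ≤ 1),
      clamp01_eq (by linarith [hτ.1, hs.2] : (0:ℝ) ≤ (τ - s) / 2)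
        (by linarith [hτ.2, hs.1] : (τ - s) / 2 ≤ 1)]
  have e2 : (∫ τ in (0:ℝ)..η, ∫ s in (0:ℝ)..τ, muT (fun x => c (clamp01 x)) lam0 τ s * H τ s)
      = ∫ τ in (0:ℝ)..η, ∫ s in (0:ℝ)..τ, muT c lam0 τ s * H τ s := by
    apply intervalIntegral.integral_congr
    intro τ hτ
    rw [Set.uIcc_of_le h0] at hτ
    dsimp only
    apply intervalIntegral.integral_congr
    intro s hs
    rw [Set.uIcc_of_le hτ.1] at hs
    dsimp only
    unfold muT
    beta_reduce
    rw [clamp01_eq (by linarith [hτ.1, hs.1] : (0:ℝ) ≤ (τ + s) / 2)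
        (by linarith [hτ.2, hs.2, h1] : (τ + s) / 2 ≤ 1),
      clamp01_eq (by linarith [hs.2] : (0:ℝ) ≤ (τ - s) / 2)
        (by linarith [hτ.2, hs.1, h1] : (τ - s) / 2 ≤ 1)]
  unfold PhiOp
  rw [e1, e2]

/-- the weighted candidate function associated with `u`. -/
noncomputable def GFdef (K : ℝ) (u : BoundedContinuousFunction (ℝ × ℝ) ℝ) : ℝ → ℝ → ℝ :=
  fun x y => Real.exp (K * clamp01 y) * u (retr (x, y))

/-- the (conjugated) Picard operator, as a bare function. -/
noncomputable def TFdef (c : ℝ → ℝ) (lam0 : ℝ) (f : ℝ → ℝ → ℝ) (K : ℝ)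
    (u : BoundedContinuousFunction (ℝ × ℝ) ℝ) : ℝ × ℝ → ℝ :=
  fun p => Real.exp (-(K * clamp01 p.2)) *
    (Gzero lam0 f (retr p).1 (retr p).2 + PhiOp c lam0 f (GFdef K u) (retr p).1 (retr p).2)

lemma cont_GFdef (K : ℝ) (u : BoundedContinuousFunction (ℝ × ℝ) ℝ) :
    Continuous fun q : ℝ × ℝ => GFdef K u q.1 q.2 := by
  unfold GFdef
  have h1 : Continuous fun q : ℝ × ℝ => Real.exp (K * clamp01 q.2) :=
    Real.continuous_exp.comp (continuous_const.mul (continuous_clamp01.comp continuous_snd))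
  exact h1.mul (u.continuous.comp continuous_retr)

lemma cont_TFdef {c : ℝ → ℝ} {lam0 : ℝ} {f : ℝ → ℝ → ℝ} {K : ℝ} (hc : Continuous c)
    (hf : Continuous fun q : ℝ × ℝ => f q.1 q.2)
    (u : BoundedContinuousFunction (ℝ × ℝ) ℝ) :
    Continuous (TFdef c lam0 f K u) := by
  unfold TFdef
  have h1 : Continuous fun p : ℝ × ℝ => Real.exp (-(K * clamp01 p.2)) :=
    Real.continuous_exp.comp ((continuous_const.mul (continuous_clamp01.comp continuous_snd)).neg)
  exact h1.mul (((cont_Gzero hf).comp continuous_retr).add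
    ((cont_PhiOp hc hf (cont_GFdef K u)).comp continuous_retr))

lemma bdd_TFdef {c : ℝ → ℝ} {lam0 : ℝ} {f : ℝ → ℝ → ℝ} {K : ℝ} (hc : Continuous c)
    (hf : Continuous fun q : ℝ × ℝ => f q.1 q.2)
    (u : BoundedContinuousFunction (ℝ × ℝ) ℝ) :
    ∃ b : ℝ, ∀ p : ℝ × ℝ, |TFdef c lam0 f K u p| ≤ b := by
  have hFfc : Continuous fun q : ℝ × ℝ => Real.exp (-(K * clamp01 q.2)) *
      (Gzero lam0 f q.1 q.2 + PhiOp c lam0 f (GFdef K u) q.1 q.2) := by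
    have h1 : Continuous fun q : ℝ × ℝ => Real.exp (-(K * clamp01 q.2)) :=
      Real.continuous_exp.comp ((continuous_const.mul (continuous_clamp01.comp continuous_snd)).neg)
    exact h1.mul ((cont_Gzero hf).add (cont_PhiOp hc hf (cont_GFdef K u)))
  obtain ⟨b, hb⟩ := isCompact_Eset.exists_bound_of_continuousOn hFfc.continuousOn
  refine ⟨b, fun p => ?_⟩
  have heq : TFdef c lam0 f K u p = Real.exp (-(K * clamp01 (retr p).2)) *
      (Gzero lam0 f (retr p).1 (retr p).2 + PhiOp c lam0 f (GFdef K u) (retr p).1 (retr p).2) := by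
    unfold TFdef
    rw [retr_snd, clamp01_idem]
  have := hb (retr p) (retr_mem p)
  rw [Real.norm_eq_abs] at this
  rw [heq]
  exact this

lemma GFdef_diff_bound (K : ℝ) (u v : BoundedContinuousFunction (ℝ × ℝ) ℝ) (x y : ℝ) :
    |GFdef K u x y - GFdef K v x y| ≤ dist u v * Real.exp (K * clamp01 y) := by
  have heq : GFdef K u x y - GFdef K v x y
      = Real.exp (K * clamp01 y) * (u (retr (x, y)) - v (retr (x, y))) := by
    unfold GFdef; ring
  rw [heq, abs_mul, abs_of_pos (Real.exp_pos _), mul_comm]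
  have hd : |u (retr (x, y)) - v (retr (x, y))| ≤ dist u v := by
    have := BoundedContinuousFunction.dist_coe_le_dist (f := u) (g := v) (retr (x, y))
    rwa [Real.dist_eq] at this
  exact mul_le_mul_of_nonneg_right hd (Real.exp_pos _).le

end Stmt15Aux

open Stmt15Aux in
theorem stmt15 (c1 : ℝ → ℝ) (lam0 : ℝ) (f : ℝ → ℝ → ℝ)
    (hc1 : ContDiffOn ℝ 1 c1 (Set.Icc 0 1))
    (hfc : Continuous (fun q : ℝ × ℝ => f q.1 q.2))
    (hfbdd : ∃ C : ℝ, ∀ x y : ℝ, |f x y| ≤ C) :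
    ∃ G : ℝ → ℝ → ℝ,
      ContinuousOn (fun q : ℝ × ℝ => G q.1 q.2) Eset ∧
      ∀ ξ η : ℝ, (ξ, η) ∈ Eset → G ξ η = Gzero lam0 f ξ η + PhiOp c1 lam0 f G ξ η := by
  classical
  obtain ⟨Fb0, hFb0⟩ := hfbdd
  set Fb : ℝ := max Fb0 0 with hFbdef
  have hFb : ∀ x y, |f x y| ≤ Fb := fun x y => (hFb0 x y).trans (le_max_left _ _)
  have hFbnn : 0 ≤ Fb := le_max_right _ _
  set c' : ℝ → ℝ := fun x => c1 (clamp01 x) with hc'def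
  have hc'c : Continuous c' :=
    (hc1.continuousOn).comp_continuous continuous_clamp01 clamp01_mem
  obtain ⟨Mc, hMc⟩ :=
    (isCompact_Icc (a := (0:ℝ)) (b := 1)).exists_bound_of_continuousOn hc1.continuousOn
  set M : ℝ := |lam0| + 2 * Mc with hMdef
  have hM : ∀ x y, |muT c' lam0 x y| ≤ M := by
    intro x y
    have b1 := hMc _ (clamp01_mem ((x + y) / 2))
    have b2 := hMc _ (clamp01_mem ((x - y) / 2))
    rw [Real.norm_eq_abs] at b1 b2
    unfold muT
    have e1 : |lam0 - c' ((x + y) / 2) + c' ((x - y) / 2)|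
        ≤ |lam0 - c' ((x + y) / 2)| + |c' ((x - y) / 2)| := abs_add_le _ _
    have e2 : |lam0 - c' ((x + y) / 2)| ≤ |lam0| + |c' ((x + y) / 2)| := by
      rw [sub_eq_add_neg]
      exact (abs_add_le _ _).trans (by rw [abs_neg])
    have e3 : |c' ((x + y) / 2)| ≤ Mc := by rw [hc'def]; exact b1
    have e4 : |c' ((x - y) / 2)| ≤ Mc := by rw [hc'def]; exact b2
    rw [hMdef]; linarith
  have hM0 : 0 ≤ M := le_trans (abs_nonneg _) (hM 0 0)
  set K : ℝ := 2 * (M + Fb) + 1 with hKdef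
  have hKpos : 0 < K := by rw [hKdef]; linarith
  set X := BoundedContinuousFunction (ℝ × ℝ) ℝ with hXdef
  have hTb : ∀ u : X, ∃ b : ℝ, ∀ p : ℝ × ℝ, |TFdef c' lam0 f K u p| ≤ b :=
    fun u => bdd_TFdef hc'c hfc u
  set T : X → X := fun u => BoundedContinuousFunction.mkOfBound
    ⟨TFdef c' lam0 f K u, cont_TFdef hc'c hfc u⟩ (2 * (hTb u).choose) (by
      intro x y
      have hbx := (hTb u).choose_spec x
      have hby := (hTb u).choose_spec y
      rw [Real.dist_eq]
      have : |TFdef c' lam0 f K u x - TFdef c' lam0 f K u y|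
          ≤ |TFdef c' lam0 f K u x| + |TFdef c' lam0 f K u y| := by
        rw [sub_eq_add_neg]
        exact (abs_add_le _ _).trans (by rw [abs_neg])
      simp only [ContinuousMap.coe_mk]
      linarith) with hTdef
  have hTcoe : ∀ (u : X) (p : ℝ × ℝ), (T u) p = TFdef c' lam0 f K u p := fun u p => rfl
  have hratio : (M + Fb) / K ≤ 1 / 2 := by
    rw [div_le_div_iff₀ hKpos (by norm_num)]
    rw [hKdef]; linarith
  have hlip : LipschitzWith (1 / 2 : NNReal) T := by
    apply LipschitzWith.of_dist_le_mul
    intro u v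
    have hcoe : ((1 / 2 : NNReal) : ℝ) = 1 / 2 := by norm_num
    rw [hcoe]
    apply (BoundedContinuousFunction.dist_le (by positivity)).2
    intro p
    rw [Real.dist_eq, hTcoe, hTcoe]
    have hqE : ((retr p).1, (retr p).2) ∈ Eset := retr_mem p
    have hdiff : TFdef c' lam0 f K u p - TFdef c' lam0 f K v p
        = Real.exp (-(K * clamp01 p.2)) *
          (PhiOp c' lam0 f (GFdef K u) (retr p).1 (retr p).2
            - PhiOp c' lam0 f (GFdef K v) (retr p).1 (retr p).2) := by
      unfold TFdef; ring
    rw [hdiff, phi_sub c' lam0 f (GFdef K u) (GFdef K v) hc'c hfc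
      (cont_GFdef K u) (cont_GFdef K v) (retr p).1 (retr p).2]
    have hb := phi_bound c' lam0 f (fun x y => GFdef K u x y - GFdef K v x y)
      hM hFb (fun x y => GFdef_diff_bound K u v x y) dist_nonneg hKpos hqE
    rw [abs_mul, abs_of_pos (Real.exp_pos _)]
    have hq2 : (retr p).2 = clamp01 p.2 := retr_snd p
    have hexp1 : Real.exp (-(K * clamp01 p.2)) * Real.exp (K * clamp01 p.2) = 1 := by
      rw [← Real.exp_add]; simp
    calc Real.exp (-(K * clamp01 p.2)) *
        |PhiOp c' lam0 f (fun x y => GFdef K u x y - GFdef K v x y) (retr p).1 (retr p).2|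
        ≤ Real.exp (-(K * clamp01 p.2)) *
          ((M + Fb) * dist u v * Real.exp (K * (retr p).2) / K) := by
          exact mul_le_mul_of_nonneg_left hb (Real.exp_pos _).le
      _ = (M + Fb) / K * dist u v *
          (Real.exp (-(K * clamp01 p.2)) * Real.exp (K * clamp01 p.2)) := by
          rw [hq2]; ring
      _ = (M + Fb) / K * dist u v := by rw [hexp1, mul_one]
      _ ≤ 1 / 2 * dist u v := mul_le_mul_of_nonneg_right hratio dist_nonneg
  have hcontr : ContractingWith (1 / 2 : NNReal) T :=
    ⟨by rw [← NNReal.coe_lt_coe]; norm_num, hlip⟩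
  have hne : Nonempty X := ⟨0⟩
  set u : X := ContractingWith.fixedPoint T hcontr with hudef
  have hfix : T u = u := hcontr.fixedPoint_isFixedPt
  refine ⟨GFdef K u, (cont_GFdef K u).continuousOn, ?_⟩
  intro ξ η hq
  have hr : retr (ξ, η) = (ξ, η) := retr_eq hq
  have hcl : clamp01 η = η := clamp01_eq hq.1 hq.2.1
  have hval : (u : ℝ × ℝ → ℝ) (ξ, η) = TFdef c' lam0 f K u (ξ, η) := by
    conv_lhs => rw [← hfix]
    exact hTcoe u (ξ, η)
  have hGu : GFdef K u ξ η = Real.exp (K * η) * (u (ξ, η)) := by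
    unfold GFdef
    rw [hcl, hr]
  have hTF : TFdef c' lam0 f K u (ξ, η) = Real.exp (-(K * η)) *
      (Gzero lam0 f ξ η + PhiOp c' lam0 f (GFdef K u) ξ η) := by
    unfold TFdef
    rw [hr, hcl]
  have hcongr : PhiOp c' lam0 f (GFdef K u) ξ η = PhiOp c1 lam0 f (GFdef K u) ξ η := by
    rw [hc'def]
    exact phi_congr c1 lam0 f (GFdef K u) hq
  have hexp1 : Real.exp (K * η) * Real.exp (-(K * η)) = 1 := by
    rw [← Real.exp_add]; simp
  rw [hGu, hval, hTF, hcongr, ← mul_assoc, hexp1, one_mul]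
end

section
/- Let Ḡ : E → ℝ be any continuous solution of the kernel integral equation Ḡ = G₀ + Φ_{Ḡ}, let G_n be the successive approximation sequence G_{n+1} := G₀ + Φ_{G_n}, and set L := max_{(ξ,η)∈E} |Φ_{Ḡ}(ξ,η)|, f̄ := sup |f|, λ₁ := max{|λ₀|, max_{(x,y)∈[0,1]×[0,1]} |λ₀ - c₁(x) + c₁(y)|} and M := (λ₁ + f̄)/2. Then for every n ∈ ℕ₀ and every (ξ,η) ∈ E one has |G_n(ξ,η) - Ḡ(ξ,η)| ≤ (L·M^n/n!) · (ξ+η)^n. -/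
open MeasureTheory intervalIntegral

/-! ### Auxiliary lemmas -/

/-- parametric interval integral with both endpoints varying is continuous -/
lemma contA {X : Type*} [TopologicalSpace X] {F : X → ℝ → ℝ}
    (hF : Continuous (Function.uncurry F)) {u v : X → ℝ} (hu : Continuous u)
    (hv : Continuous v) : Continuous fun x => ∫ t in u x..v x, F x t := by
  have key : ∀ x, ∫ t in u x..v x, F x t
      = (∫ t in (0:ℝ)..v x, F x t) - ∫ t in (0:ℝ)..u x, F x t := by
    intro x
    rw [integral_interval_sub_left ((hF.uncurry_left x).intervalIntegrable _ _)
      ((hF.uncurry_left x).intervalIntegrable _ _)]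
  simp only [key]
  exact (continuous_parametric_intervalIntegral_of_continuous hF hv).sub
    (continuous_parametric_intervalIntegral_of_continuous hF hu)

lemma int_pow_shift (A d a b : ℝ) (n : ℕ) :
    ∫ s in a..b, A * (d + s) ^ n
      = A * (((d + b) ^ (n + 1) - (d + a) ^ (n + 1)) / ((n : ℝ) + 1)) := by
  rw [intervalIntegral.integral_const_mul,
    intervalIntegral.integral_comp_add_left (fun x => x ^ n) d, integral_pow]

lemma cont_doubleInt1 {g : ℝ → ℝ → ℝ} (hg : Continuous fun q : ℝ × ℝ => g q.1 q.2) :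
    Continuous fun q : ℝ × ℝ => ∫ τ in q.2..q.1, ∫ s in (0:ℝ)..q.2, g τ s := by
  apply contA (F := fun (q : ℝ × ℝ) τ => ∫ s in (0:ℝ)..q.2, g τ s) ?_ continuous_snd
    continuous_fst
  exact contA (F := fun (p : (ℝ × ℝ) × ℝ) s => g p.2 s)
    (show Continuous fun w : ((ℝ × ℝ) × ℝ) × ℝ => g w.1.2 w.2 from
      hg.comp (continuous_fst.snd.prodMk continuous_snd)) continuous_const
    continuous_fst.snd

lemma cont_doubleInt2 {g : ℝ → ℝ → ℝ} (hg : Continuous fun q : ℝ × ℝ => g q.1 q.2) :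
    Continuous fun η : ℝ => ∫ τ in (0:ℝ)..η, ∫ s in (0:ℝ)..τ, g τ s := by
  apply contA (F := fun (η : ℝ) τ => ∫ s in (0:ℝ)..τ, g τ s) ?_ continuous_const
    continuous_id
  exact contA (F := fun (p : ℝ × ℝ) s => g p.2 s)
    (show Continuous fun w : (ℝ × ℝ) × ℝ => g w.1.2 w.2 from
      hg.comp (continuous_fst.snd.prodMk continuous_snd)) continuous_const continuous_snd

lemma cont_tripleInt3 {k : ℝ → ℝ → ℝ → ℝ}
    (hk : Continuous fun p : ℝ × ℝ × ℝ => k p.1 p.2.1 p.2.2) :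
    Continuous fun q : ℝ × ℝ =>
      ∫ z in q.2..q.1, ∫ s in (0:ℝ)..q.2, ∫ τ in z..(z + q.2 - s), k z τ s := by
  apply contA (F := fun (q : ℝ × ℝ) z => ∫ s in (0:ℝ)..q.2, ∫ τ in z..(z + q.2 - s), k z τ s)
    ?_ continuous_snd continuous_fst
  apply contA (F := fun (p : (ℝ × ℝ) × ℝ) s => ∫ τ in p.2..(p.2 + p.1.2 - s), k p.2 τ s)
    ?_ continuous_const continuous_fst.snd
  exact contA (F := fun (r : ((ℝ × ℝ) × ℝ) × ℝ) τ => k r.1.2 τ r.2)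
    (show Continuous fun w : (((ℝ × ℝ) × ℝ) × ℝ) × ℝ => k w.1.1.2 w.2 w.1.2 from
      hk.comp (continuous_fst.fst.snd.prodMk (continuous_snd.prodMk continuous_fst.snd)))
    (by fun_prop) (by fun_prop)

lemma cont_tripleInt4 {k : ℝ → ℝ → ℝ → ℝ}
    (hk : Continuous fun p : ℝ × ℝ × ℝ => k p.1 p.2.1 p.2.2) :
    Continuous fun η : ℝ =>
      ∫ z in (0:ℝ)..η, ∫ s in (0:ℝ)..z, ∫ τ in z..(2 * z - s), k z τ s := by
  apply contA (F := fun (η : ℝ) z => ∫ s in (0:ℝ)..z, ∫ τ in z..(2 * z - s), k z τ s)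
    ?_ continuous_const continuous_id
  apply contA (F := fun (p : ℝ × ℝ) s => ∫ τ in p.2..(2 * p.2 - s), k p.2 τ s)
    ?_ continuous_const continuous_snd
  exact contA (F := fun (r : (ℝ × ℝ) × ℝ) τ => k r.1.2 τ r.2)
    (show Continuous fun w : ((ℝ × ℝ) × ℝ) × ℝ => k w.1.1.2 w.2 w.1.2 from
      hk.comp (continuous_fst.fst.snd.prodMk (continuous_snd.prodMk continuous_fst.snd)))
    (by fun_prop) (by fun_prop)

lemma cont_muT {c1 : ℝ → ℝ} (hc1 : Continuous c1) (lam0 : ℝ) :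
    Continuous fun q : ℝ × ℝ => muT c1 lam0 q.1 q.2 := by
  unfold muT; fun_prop

lemma cont_kf {f H : ℝ → ℝ → ℝ} (hf : Continuous fun q : ℝ × ℝ => f q.1 q.2)
    (hH : Continuous fun q : ℝ × ℝ => H q.1 q.2) :
    Continuous fun p : ℝ × ℝ × ℝ =>
      f ((p.2.1 - p.2.2) / 2) (p.1 - (p.2.1 + p.2.2) / 2) * H p.2.1 p.2.2 := by
  exact (hf.comp ((((continuous_snd.fst.sub continuous_snd.snd).div_const 2)).prodMk
      (continuous_fst.sub ((continuous_snd.fst.add continuous_snd.snd).div_const 2)))).mul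
    (hH.comp (continuous_snd.fst.prodMk continuous_snd.snd))

lemma cont_PhiOp {c1 : ℝ → ℝ} (hc1 : Continuous c1) (lam0 : ℝ) {f H : ℝ → ℝ → ℝ}
    (hf : Continuous fun q : ℝ × ℝ => f q.1 q.2)
    (hH : Continuous fun q : ℝ × ℝ => H q.1 q.2) :
    Continuous fun q : ℝ × ℝ => PhiOp c1 lam0 f H q.1 q.2 := by
  have hg : Continuous fun q : ℝ × ℝ => muT c1 lam0 q.1 q.2 * H q.1 q.2 :=
    (cont_muT hc1 lam0).mul hH
  have hk := cont_kf hf hH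
  unfold PhiOp
  exact ((((continuous_const.mul (cont_doubleInt1 hg)).add
    (continuous_const.mul ((cont_doubleInt2 hg).comp continuous_snd))).add
    (continuous_const.mul
      (cont_tripleInt3 (k := fun z τ s => f ((τ - s) / 2) (z - (τ + s) / 2) * H τ s) hk))).add
    (continuous_const.mul
      ((cont_tripleInt4 (k := fun z τ s => f ((τ - s) / 2) (z - (τ + s) / 2) * H τ s) hk).comp
        continuous_snd)))

lemma cont_Gzero (lam0 : ℝ) {f : ℝ → ℝ → ℝ} (hf : Continuous fun q : ℝ × ℝ => f q.1 q.2) :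
    Continuous fun q : ℝ × ℝ => Gzero lam0 f q.1 q.2 := by
  have hg : Continuous fun q : ℝ × ℝ => f ((q.1 + q.2) / 2) ((q.1 - q.2) / 2) :=
    hf.comp (((continuous_fst.add continuous_snd).div_const 2).prodMk
      ((continuous_fst.sub continuous_snd).div_const 2))
  unfold Gzero
  exact (((by fun_prop : Continuous fun q : ℝ × ℝ => lam0 / 4 * (q.1 + q.2)).add
    (continuous_const.mul (cont_doubleInt1 hg))).add
    (continuous_const.mul ((cont_doubleInt2 hg).comp continuous_snd)))

lemma mem_Eset {τ s : ℝ} (h0 : 0 ≤ s) (h1 : s ≤ 1) (h2 : s ≤ τ) (h3 : τ ≤ 2 - s) :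
    (τ, s) ∈ Eset := ⟨h0, h1, h2, h3⟩

/-- congruence for `PhiOp` -/
lemma phi_congr {c1 c1' : ℝ → ℝ} {lam0 : ℝ} {f H H' : ℝ → ℝ → ℝ}
    (hμ : ∀ τ s : ℝ, (τ, s) ∈ Eset → muT c1 lam0 τ s * H τ s = muT c1' lam0 τ s * H' τ s)
    (hH : ∀ τ s : ℝ, (τ, s) ∈ Eset → H τ s = H' τ s)
    {ξ η : ℝ} (hq : (ξ, η) ∈ Eset) :
    PhiOp c1 lam0 f H ξ η = PhiOp c1' lam0 f H' ξ η := by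
  have h0 : (0:ℝ) ≤ η := hq.1
  have h1 : η ≤ 1 := hq.2.1
  have h2 : η ≤ ξ := hq.2.2.1
  have h3 : ξ ≤ 2 - η := hq.2.2.2
  have e1 : (∫ τ in η..ξ, ∫ s in (0:ℝ)..η, muT c1 lam0 τ s * H τ s)
      = ∫ τ in η..ξ, ∫ s in (0:ℝ)..η, muT c1' lam0 τ s * H' τ s := by
    apply intervalIntegral.integral_congr
    intro τ hτ; rw [Set.uIcc_of_le h2] at hτ
    apply intervalIntegral.integral_congr
    intro s hs; rw [Set.uIcc_of_le h0] at hs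
    exact hμ _ _ (mem_Eset hs.1 (by linarith [hs.2]) (by linarith [hτ.1, hs.2])
      (by linarith [hτ.2, hs.2]))
  have e2 : (∫ τ in (0:ℝ)..η, ∫ s in (0:ℝ)..τ, muT c1 lam0 τ s * H τ s)
      = ∫ τ in (0:ℝ)..η, ∫ s in (0:ℝ)..τ, muT c1' lam0 τ s * H' τ s := by
    apply intervalIntegral.integral_congr
    intro τ hτ; rw [Set.uIcc_of_le h0] at hτ
    apply intervalIntegral.integral_congr
    intro s hs; rw [Set.uIcc_of_le hτ.1] at hs
    exact hμ _ _ (mem_Eset hs.1 (by linarith [hs.2, hτ.2]) hs.2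
      (by linarith [hs.1, hs.2, hτ.2]))
  have e3 : (∫ z in η..ξ, ∫ s in (0:ℝ)..η, ∫ τ in z..(z + η - s),
        f ((τ - s) / 2) (z - (τ + s) / 2) * H τ s)
      = ∫ z in η..ξ, ∫ s in (0:ℝ)..η, ∫ τ in z..(z + η - s),
        f ((τ - s) / 2) (z - (τ + s) / 2) * H' τ s := by
    apply intervalIntegral.integral_congr
    intro z hz; rw [Set.uIcc_of_le h2] at hz
    apply intervalIntegral.integral_congr
    intro s hs; rw [Set.uIcc_of_le h0] at hs
    apply intervalIntegral.integral_congr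
    intro τ hτ; rw [Set.uIcc_of_le (by linarith [hs.2] : z ≤ z + η - s)] at hτ
    show f ((τ - s) / 2) (z - (τ + s) / 2) * H τ s
      = f ((τ - s) / 2) (z - (τ + s) / 2) * H' τ s
    rw [hH τ s (mem_Eset hs.1 (by linarith [hs.2]) (by linarith [hτ.1, hz.1, hs.2])
      (by linarith [hτ.2, hz.2]))]
  have e4 : (∫ z in (0:ℝ)..η, ∫ s in (0:ℝ)..z, ∫ τ in z..(2 * z - s),
        f ((τ - s) / 2) (z - (τ + s) / 2) * H τ s)
      = ∫ z in (0:ℝ)..η, ∫ s in (0:ℝ)..z, ∫ τ in z..(2 * z - s),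
        f ((τ - s) / 2) (z - (τ + s) / 2) * H' τ s := by
    apply intervalIntegral.integral_congr
    intro z hz; rw [Set.uIcc_of_le h0] at hz
    apply intervalIntegral.integral_congr
    intro s hs; rw [Set.uIcc_of_le hz.1] at hs
    apply intervalIntegral.integral_congr
    intro τ hτ; rw [Set.uIcc_of_le (by linarith [hs.2] : z ≤ 2 * z - s)] at hτ
    show f ((τ - s) / 2) (z - (τ + s) / 2) * H τ s
      = f ((τ - s) / 2) (z - (τ + s) / 2) * H' τ s
    rw [hH τ s (mem_Eset hs.1 (by linarith [hs.2, hz.2]) (by linarith [hτ.1, hs.2])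
      (by linarith [hτ.2, hz.2]))]
  unfold PhiOp
  rw [e1, e2, e3, e4]

/-- linearity of `PhiOp` in `H` (difference form) -/
lemma phi_sub {c1 : ℝ → ℝ} (hc1 : Continuous c1) (lam0 : ℝ) {f H1 H2 : ℝ → ℝ → ℝ}
    (hf : Continuous fun q : ℝ × ℝ => f q.1 q.2)
    (h1 : Continuous fun q : ℝ × ℝ => H1 q.1 q.2)
    (h2 : Continuous fun q : ℝ × ℝ => H2 q.1 q.2) (ξ η : ℝ) :
    PhiOp c1 lam0 f H1 ξ η - PhiOp c1 lam0 f H2 ξ η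
      = PhiOp c1 lam0 f (fun a b => H1 a b - H2 a b) ξ η := by
  have hmu := cont_muT hc1 lam0
  have hg1 : Continuous fun q : ℝ × ℝ => muT c1 lam0 q.1 q.2 * H1 q.1 q.2 := hmu.mul h1
  have hg2 : Continuous fun q : ℝ × ℝ => muT c1 lam0 q.1 q.2 * H2 q.1 q.2 := hmu.mul h2
  have sl : ∀ g : ℝ → ℝ → ℝ, (Continuous fun q : ℝ × ℝ => g q.1 q.2) →
      ∀ a : ℝ, Continuous fun b => g a b := fun g hg a =>
    hg.comp (continuous_const.prodMk continuous_id)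
  have hk1 := cont_kf hf h1
  have hk2 := cont_kf hf h2
  -- term 1
  have e1 : (∫ τ in η..ξ, ∫ s in (0:ℝ)..η, muT c1 lam0 τ s * H1 τ s)
      - (∫ τ in η..ξ, ∫ s in (0:ℝ)..η, muT c1 lam0 τ s * H2 τ s)
      = ∫ τ in η..ξ, ∫ s in (0:ℝ)..η, muT c1 lam0 τ s * (H1 τ s - H2 τ s) := by
    rw [← intervalIntegral.integral_sub
      ((continuous_parametric_intervalIntegral_of_continuous'
        (f := fun τ s => muT c1 lam0 τ s * H1 τ s)
        (show Continuous (Function.uncurry fun τ s => muT c1 lam0 τ s * H1 τ s) from hg1)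
        0 η).intervalIntegrable _ _)
      ((continuous_parametric_intervalIntegral_of_continuous'
        (f := fun τ s => muT c1 lam0 τ s * H2 τ s)
        (show Continuous (Function.uncurry fun τ s => muT c1 lam0 τ s * H2 τ s) from hg2)
        0 η).intervalIntegrable _ _)]
    apply intervalIntegral.integral_congr
    intro τ _
    show (∫ s in (0:ℝ)..η, muT c1 lam0 τ s * H1 τ s)
        - (∫ s in (0:ℝ)..η, muT c1 lam0 τ s * H2 τ s)
        = ∫ s in (0:ℝ)..η, muT c1 lam0 τ s * (H1 τ s - H2 τ s)
    rw [← intervalIntegral.integral_sub ((sl (fun a b => muT c1 lam0 a b * H1 a b) hg1 τ).intervalIntegrable _ _)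
      ((sl (fun a b => muT c1 lam0 a b * H2 a b) hg2 τ).intervalIntegrable _ _)]
    apply intervalIntegral.integral_congr
    intro s _
    show muT c1 lam0 τ s * H1 τ s - muT c1 lam0 τ s * H2 τ s
        = muT c1 lam0 τ s * (H1 τ s - H2 τ s)
    ring
  -- term 2
  have e2 : (∫ τ in (0:ℝ)..η, ∫ s in (0:ℝ)..τ, muT c1 lam0 τ s * H1 τ s)
      - (∫ τ in (0:ℝ)..η, ∫ s in (0:ℝ)..τ, muT c1 lam0 τ s * H2 τ s)
      = ∫ τ in (0:ℝ)..η, ∫ s in (0:ℝ)..τ, muT c1 lam0 τ s * (H1 τ s - H2 τ s) := by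
    have i1 : IntervalIntegrable (fun τ => ∫ s in (0:ℝ)..τ, muT c1 lam0 τ s * H1 τ s)
        MeasureTheory.volume 0 η :=
      (contA (F := fun τ s => muT c1 lam0 τ s * H1 τ s)
        (show Continuous (Function.uncurry fun τ s => muT c1 lam0 τ s * H1 τ s) from hg1)
        continuous_const continuous_id).intervalIntegrable _ _
    have i2 : IntervalIntegrable (fun τ => ∫ s in (0:ℝ)..τ, muT c1 lam0 τ s * H2 τ s)
        MeasureTheory.volume 0 η :=
      (contA (F := fun τ s => muT c1 lam0 τ s * H2 τ s)
        (show Continuous (Function.uncurry fun τ s => muT c1 lam0 τ s * H2 τ s) from hg2)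
        continuous_const continuous_id).intervalIntegrable _ _
    rw [← intervalIntegral.integral_sub i1 i2]
    apply intervalIntegral.integral_congr
    intro τ _
    show (∫ s in (0:ℝ)..τ, muT c1 lam0 τ s * H1 τ s)
        - (∫ s in (0:ℝ)..τ, muT c1 lam0 τ s * H2 τ s)
        = ∫ s in (0:ℝ)..τ, muT c1 lam0 τ s * (H1 τ s - H2 τ s)
    rw [← intervalIntegral.integral_sub ((sl (fun a b => muT c1 lam0 a b * H1 a b) hg1 τ).intervalIntegrable _ _)
      ((sl (fun a b => muT c1 lam0 a b * H2 a b) hg2 τ).intervalIntegrable _ _)]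
    apply intervalIntegral.integral_congr
    intro s _
    show muT c1 lam0 τ s * H1 τ s - muT c1 lam0 τ s * H2 τ s
        = muT c1 lam0 τ s * (H1 τ s - H2 τ s)
    ring
  -- term 3
  have contB1 : Continuous fun p : ℝ × ℝ =>
      ∫ τ in p.1..(p.1 + η - p.2), f ((τ - p.2) / 2) (p.1 - (τ + p.2) / 2) * H1 τ p.2 :=
    contA (F := fun (p : ℝ × ℝ) τ => f ((τ - p.2) / 2) (p.1 - (τ + p.2) / 2) * H1 τ p.2)
      (show Continuous fun w : (ℝ × ℝ) × ℝ =>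
          f ((w.2 - w.1.2) / 2) (w.1.1 - (w.2 + w.1.2) / 2) * H1 w.2 w.1.2 from
        hk1.comp (continuous_fst.fst.prodMk (continuous_snd.prodMk continuous_fst.snd)))
      continuous_fst (by fun_prop)
  have contB2 : Continuous fun p : ℝ × ℝ =>
      ∫ τ in p.1..(p.1 + η - p.2), f ((τ - p.2) / 2) (p.1 - (τ + p.2) / 2) * H2 τ p.2 :=
    contA (F := fun (p : ℝ × ℝ) τ => f ((τ - p.2) / 2) (p.1 - (τ + p.2) / 2) * H2 τ p.2)
      (show Continuous fun w : (ℝ × ℝ) × ℝ =>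
          f ((w.2 - w.1.2) / 2) (w.1.1 - (w.2 + w.1.2) / 2) * H2 w.2 w.1.2 from
        hk2.comp (continuous_fst.fst.prodMk (continuous_snd.prodMk continuous_fst.snd)))
      continuous_fst (by fun_prop)
  have e3 : (∫ z in η..ξ, ∫ s in (0:ℝ)..η, ∫ τ in z..(z + η - s),
        f ((τ - s) / 2) (z - (τ + s) / 2) * H1 τ s)
      - (∫ z in η..ξ, ∫ s in (0:ℝ)..η, ∫ τ in z..(z + η - s),
        f ((τ - s) / 2) (z - (τ + s) / 2) * H2 τ s)
      = ∫ z in η..ξ, ∫ s in (0:ℝ)..η, ∫ τ in z..(z + η - s),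
        f ((τ - s) / 2) (z - (τ + s) / 2) * (H1 τ s - H2 τ s) := by
    rw [← intervalIntegral.integral_sub
      ((continuous_parametric_intervalIntegral_of_continuous'
        (f := fun z s => ∫ τ in z..(z + η - s), f ((τ - s) / 2) (z - (τ + s) / 2) * H1 τ s)
        (show Continuous (Function.uncurry fun z s =>
          ∫ τ in z..(z + η - s), f ((τ - s) / 2) (z - (τ + s) / 2) * H1 τ s) from contB1)
        0 η).intervalIntegrable _ _)
      ((continuous_parametric_intervalIntegral_of_continuous'
        (f := fun z s => ∫ τ in z..(z + η - s), f ((τ - s) / 2) (z - (τ + s) / 2) * H2 τ s)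
        (show Continuous (Function.uncurry fun z s =>
          ∫ τ in z..(z + η - s), f ((τ - s) / 2) (z - (τ + s) / 2) * H2 τ s) from contB2)
        0 η).intervalIntegrable _ _)]
    apply intervalIntegral.integral_congr
    intro z _
    show (∫ s in (0:ℝ)..η, ∫ τ in z..(z + η - s), f ((τ - s) / 2) (z - (τ + s) / 2) * H1 τ s)
        - (∫ s in (0:ℝ)..η, ∫ τ in z..(z + η - s),
            f ((τ - s) / 2) (z - (τ + s) / 2) * H2 τ s)
        = ∫ s in (0:ℝ)..η, ∫ τ in z..(z + η - s),
            f ((τ - s) / 2) (z - (τ + s) / 2) * (H1 τ s - H2 τ s)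
    have j1 : IntervalIntegrable (fun s =>
        ∫ τ in z..(z + η - s), f ((τ - s) / 2) (z - (τ + s) / 2) * H1 τ s)
        MeasureTheory.volume 0 η :=
      ((contB1.comp (continuous_const.prodMk continuous_id :
        Continuous fun s : ℝ => ((z, s) : ℝ × ℝ))).intervalIntegrable _ _)
    have j2 : IntervalIntegrable (fun s =>
        ∫ τ in z..(z + η - s), f ((τ - s) / 2) (z - (τ + s) / 2) * H2 τ s)
        MeasureTheory.volume 0 η :=
      ((contB2.comp (continuous_const.prodMk continuous_id :
        Continuous fun s : ℝ => ((z, s) : ℝ × ℝ))).intervalIntegrable _ _)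
    rw [← intervalIntegral.integral_sub j1 j2]
    apply intervalIntegral.integral_congr
    intro s _
    show (∫ τ in z..(z + η - s), f ((τ - s) / 2) (z - (τ + s) / 2) * H1 τ s)
        - (∫ τ in z..(z + η - s), f ((τ - s) / 2) (z - (τ + s) / 2) * H2 τ s)
        = ∫ τ in z..(z + η - s), f ((τ - s) / 2) (z - (τ + s) / 2) * (H1 τ s - H2 τ s)
    have l1 : IntervalIntegrable (fun τ => f ((τ - s) / 2) (z - (τ + s) / 2) * H1 τ s)
        MeasureTheory.volume z (z + η - s) :=
      ((hk1.comp (continuous_const.prodMk (continuous_id.prodMk continuous_const) :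
        Continuous fun τ : ℝ => ((z, τ, s) : ℝ × ℝ × ℝ))).intervalIntegrable _ _)
    have l2 : IntervalIntegrable (fun τ => f ((τ - s) / 2) (z - (τ + s) / 2) * H2 τ s)
        MeasureTheory.volume z (z + η - s) :=
      ((hk2.comp (continuous_const.prodMk (continuous_id.prodMk continuous_const) :
        Continuous fun τ : ℝ => ((z, τ, s) : ℝ × ℝ × ℝ))).intervalIntegrable _ _)
    rw [← intervalIntegral.integral_sub l1 l2]
    apply intervalIntegral.integral_congr
    intro τ _
    show f ((τ - s) / 2) (z - (τ + s) / 2) * H1 τ s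
        - f ((τ - s) / 2) (z - (τ + s) / 2) * H2 τ s
        = f ((τ - s) / 2) (z - (τ + s) / 2) * (H1 τ s - H2 τ s)
    ring
  -- term 4
  have contC1 : Continuous fun p : ℝ × ℝ =>
      ∫ τ in p.1..(2 * p.1 - p.2), f ((τ - p.2) / 2) (p.1 - (τ + p.2) / 2) * H1 τ p.2 :=
    contA (F := fun (p : ℝ × ℝ) τ => f ((τ - p.2) / 2) (p.1 - (τ + p.2) / 2) * H1 τ p.2)
      (show Continuous fun w : (ℝ × ℝ) × ℝ =>
          f ((w.2 - w.1.2) / 2) (w.1.1 - (w.2 + w.1.2) / 2) * H1 w.2 w.1.2 from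
        hk1.comp (continuous_fst.fst.prodMk (continuous_snd.prodMk continuous_fst.snd)))
      continuous_fst (by fun_prop)
  have contC2 : Continuous fun p : ℝ × ℝ =>
      ∫ τ in p.1..(2 * p.1 - p.2), f ((τ - p.2) / 2) (p.1 - (τ + p.2) / 2) * H2 τ p.2 :=
    contA (F := fun (p : ℝ × ℝ) τ => f ((τ - p.2) / 2) (p.1 - (τ + p.2) / 2) * H2 τ p.2)
      (show Continuous fun w : (ℝ × ℝ) × ℝ =>
          f ((w.2 - w.1.2) / 2) (w.1.1 - (w.2 + w.1.2) / 2) * H2 w.2 w.1.2 from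
        hk2.comp (continuous_fst.fst.prodMk (continuous_snd.prodMk continuous_fst.snd)))
      continuous_fst (by fun_prop)
  have e4 : (∫ z in (0:ℝ)..η, ∫ s in (0:ℝ)..z, ∫ τ in z..(2 * z - s),
        f ((τ - s) / 2) (z - (τ + s) / 2) * H1 τ s)
      - (∫ z in (0:ℝ)..η, ∫ s in (0:ℝ)..z, ∫ τ in z..(2 * z - s),
        f ((τ - s) / 2) (z - (τ + s) / 2) * H2 τ s)
      = ∫ z in (0:ℝ)..η, ∫ s in (0:ℝ)..z, ∫ τ in z..(2 * z - s),
        f ((τ - s) / 2) (z - (τ + s) / 2) * (H1 τ s - H2 τ s) := by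
    have i1 : IntervalIntegrable (fun z => ∫ s in (0:ℝ)..z, ∫ τ in z..(2 * z - s),
        f ((τ - s) / 2) (z - (τ + s) / 2) * H1 τ s) MeasureTheory.volume 0 η :=
      (contA (F := fun z s => ∫ τ in z..(2 * z - s),
          f ((τ - s) / 2) (z - (τ + s) / 2) * H1 τ s)
        (show Continuous (Function.uncurry fun z s =>
          ∫ τ in z..(2 * z - s), f ((τ - s) / 2) (z - (τ + s) / 2) * H1 τ s) from contC1)
        continuous_const continuous_id).intervalIntegrable _ _
    have i2 : IntervalIntegrable (fun z => ∫ s in (0:ℝ)..z, ∫ τ in z..(2 * z - s),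
        f ((τ - s) / 2) (z - (τ + s) / 2) * H2 τ s) MeasureTheory.volume 0 η :=
      (contA (F := fun z s => ∫ τ in z..(2 * z - s),
          f ((τ - s) / 2) (z - (τ + s) / 2) * H2 τ s)
        (show Continuous (Function.uncurry fun z s =>
          ∫ τ in z..(2 * z - s), f ((τ - s) / 2) (z - (τ + s) / 2) * H2 τ s) from contC2)
        continuous_const continuous_id).intervalIntegrable _ _
    rw [← intervalIntegral.integral_sub i1 i2]
    apply intervalIntegral.integral_congr
    intro z _
    show (∫ s in (0:ℝ)..z, ∫ τ in z..(2 * z - s), f ((τ - s) / 2) (z - (τ + s) / 2) * H1 τ s)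
        - (∫ s in (0:ℝ)..z, ∫ τ in z..(2 * z - s),
            f ((τ - s) / 2) (z - (τ + s) / 2) * H2 τ s)
        = ∫ s in (0:ℝ)..z, ∫ τ in z..(2 * z - s),
            f ((τ - s) / 2) (z - (τ + s) / 2) * (H1 τ s - H2 τ s)
    have j1 : IntervalIntegrable (fun s =>
        ∫ τ in z..(2 * z - s), f ((τ - s) / 2) (z - (τ + s) / 2) * H1 τ s)
        MeasureTheory.volume 0 z :=
      ((contC1.comp (continuous_const.prodMk continuous_id :
        Continuous fun s : ℝ => ((z, s) : ℝ × ℝ))).intervalIntegrable _ _)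
    have j2 : IntervalIntegrable (fun s =>
        ∫ τ in z..(2 * z - s), f ((τ - s) / 2) (z - (τ + s) / 2) * H2 τ s)
        MeasureTheory.volume 0 z :=
      ((contC2.comp (continuous_const.prodMk continuous_id :
        Continuous fun s : ℝ => ((z, s) : ℝ × ℝ))).intervalIntegrable _ _)
    rw [← intervalIntegral.integral_sub j1 j2]
    apply intervalIntegral.integral_congr
    intro s _
    show (∫ τ in z..(2 * z - s), f ((τ - s) / 2) (z - (τ + s) / 2) * H1 τ s)
        - (∫ τ in z..(2 * z - s), f ((τ - s) / 2) (z - (τ + s) / 2) * H2 τ s)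
        = ∫ τ in z..(2 * z - s), f ((τ - s) / 2) (z - (τ + s) / 2) * (H1 τ s - H2 τ s)
    have l1 : IntervalIntegrable (fun τ => f ((τ - s) / 2) (z - (τ + s) / 2) * H1 τ s)
        MeasureTheory.volume z (2 * z - s) :=
      ((hk1.comp (continuous_const.prodMk (continuous_id.prodMk continuous_const) :
        Continuous fun τ : ℝ => ((z, τ, s) : ℝ × ℝ × ℝ))).intervalIntegrable _ _)
    have l2 : IntervalIntegrable (fun τ => f ((τ - s) / 2) (z - (τ + s) / 2) * H2 τ s)
        MeasureTheory.volume z (2 * z - s) :=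
      ((hk2.comp (continuous_const.prodMk (continuous_id.prodMk continuous_const) :
        Continuous fun τ : ℝ => ((z, τ, s) : ℝ × ℝ × ℝ))).intervalIntegrable _ _)
    rw [← intervalIntegral.integral_sub l1 l2]
    apply intervalIntegral.integral_congr
    intro τ _
    show f ((τ - s) / 2) (z - (τ + s) / 2) * H1 τ s
        - f ((τ - s) / 2) (z - (τ + s) / 2) * H2 τ s
        = f ((τ - s) / 2) (z - (τ + s) / 2) * (H1 τ s - H2 τ s)
    ring
  unfold PhiOp
  linarith [e1, e2, e3, e4]

/-- The key integral estimate. -/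
lemma phi_bound {c1 : ℝ → ℝ} {lam0 : ℝ} {f : ℝ → ℝ → ℝ} {lam1 fbar : ℝ}
    (hlam1 : 0 ≤ lam1) (hfbar0 : 0 ≤ fbar)
    (hmu : ∀ τ s : ℝ, (τ, s) ∈ Eset → |muT c1 lam0 τ s| ≤ lam1)
    (hfb : ∀ x y : ℝ, |f x y| ≤ fbar)
    {D : ℝ → ℝ → ℝ} (n : ℕ) {c : ℝ} (hc : 0 ≤ c)
    (hDb : ∀ τ s : ℝ, (τ, s) ∈ Eset → |D τ s| ≤ c * (τ + s) ^ n)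
    {ξ η : ℝ} (hq : (ξ, η) ∈ Eset) :
    |PhiOp c1 lam0 f D ξ η|
      ≤ (lam1 + fbar) / 2 * (c * (ξ + η) ^ (n + 1) / ((n : ℝ) + 1)) := by
  have h0 : (0:ℝ) ≤ η := hq.1
  have h1 : η ≤ 1 := hq.2.1
  have h2 : η ≤ ξ := hq.2.2.1
  have h3 : ξ ≤ 2 - η := hq.2.2.2
  have hn1 : (0:ℝ) < (n : ℝ) + 1 := by positivity
  have hxy0 : (0:ℝ) ≤ ξ + η := by linarith
  set R := (ξ + η) ^ (n + 1) / ((n : ℝ) + 1) with hR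
  have hR0 : 0 ≤ R := div_nonneg (pow_nonneg hxy0 _) hn1.le
  have hcR : 0 ≤ c * R := mul_nonneg hc hR0
  -- generic inner estimate
  have inner_est : ∀ (a b d : ℝ) (g : ℝ → ℝ) (K : ℝ), 0 ≤ K → a ≤ b → 0 ≤ d + a →
      d + b ≤ ξ + η → (∀ t ∈ Set.uIoc a b, |g t| ≤ K * (d + t) ^ n) →
      |∫ t in a..b, g t| ≤ K * R := by
    intro a b d g K hK hab hda hdb hg
    have step1 : |∫ t in a..b, g t| ≤ |∫ t in a..b, K * (d + t) ^ n| := by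
      rw [← Real.norm_eq_abs (∫ t in a..b, g t)]
      apply intervalIntegral.norm_integral_le_abs_of_norm_le
      · exact (MeasureTheory.ae_restrict_iff' measurableSet_uIoc).mpr
          (Filter.Eventually.of_forall (fun t ht => by
            rw [Real.norm_eq_abs]; exact hg t ht))
      · exact (by fun_prop : Continuous fun t => K * (d + t) ^ n).intervalIntegrable _ _
    rw [int_pow_shift K d a b n] at step1
    have hmono : (d + a) ^ (n + 1) ≤ (d + b) ^ (n + 1) :=
      pow_le_pow_left₀ hda (by linarith) _
    have hup : (d + b) ^ (n + 1) ≤ (ξ + η) ^ (n + 1) :=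
      pow_le_pow_left₀ (by linarith) hdb _
    have ha0 : 0 ≤ (d + a) ^ (n + 1) := pow_nonneg hda _
    have habs : |K * (((d + b) ^ (n + 1) - (d + a) ^ (n + 1)) / ((n : ℝ) + 1))| ≤ K * R := by
      rw [abs_of_nonneg (mul_nonneg hK (div_nonneg (by linarith) hn1.le)), hR]
      apply mul_le_mul_of_nonneg_left _ hK
      apply (div_le_div_iff_of_pos_right hn1).mpr
      linarith
    linarith
  -- term 1
  have B1 : |∫ τ in η..ξ, ∫ s in (0:ℝ)..η, muT c1 lam0 τ s * D τ s|
      ≤ lam1 * (c * R) * (ξ - η) := by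
    have hpt : ∀ τ ∈ Set.uIoc η ξ, ‖∫ s in (0:ℝ)..η, muT c1 lam0 τ s * D τ s‖
        ≤ lam1 * c * R := by
      intro τ hτ
      rw [Set.uIoc_of_le h2] at hτ
      rw [Real.norm_eq_abs]
      have := inner_est 0 η τ (fun s => muT c1 lam0 τ s * D τ s) (lam1 * c)
        (mul_nonneg hlam1 hc) h0 (by linarith [hτ.1]) (by linarith [hτ.2]) ?_
      · linarith [this]
      · intro s hs
        rw [Set.uIoc_of_le h0] at hs
        have hmem : (τ, s) ∈ Eset := mem_Eset hs.1.le (by linarith [hs.2])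
          (by linarith [hτ.1, hs.2]) (by linarith [hτ.2, hs.2])
        calc |muT c1 lam0 τ s * D τ s| = |muT c1 lam0 τ s| * |D τ s| := abs_mul _ _
          _ ≤ lam1 * (c * (τ + s) ^ n) := by
              apply mul_le_mul (hmu _ _ hmem) (hDb _ _ hmem) (abs_nonneg _) hlam1
          _ = lam1 * c * (τ + s) ^ n := by ring
    have := intervalIntegral.norm_integral_le_of_norm_le_const hpt
    rw [Real.norm_eq_abs] at this
    rw [abs_of_nonneg (by linarith : (0:ℝ) ≤ ξ - η)] at this
    calc |∫ τ in η..ξ, ∫ s in (0:ℝ)..η, muT c1 lam0 τ s * D τ s|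
        ≤ lam1 * c * R * (ξ - η) := this
      _ = lam1 * (c * R) * (ξ - η) := by ring
  -- term 2
  have B2 : |∫ τ in (0:ℝ)..η, ∫ s in (0:ℝ)..τ, muT c1 lam0 τ s * D τ s|
      ≤ lam1 * (c * R) * η := by
    have hpt : ∀ τ ∈ Set.uIoc (0:ℝ) η, ‖∫ s in (0:ℝ)..τ, muT c1 lam0 τ s * D τ s‖
        ≤ lam1 * c * R := by
      intro τ hτ
      rw [Set.uIoc_of_le h0] at hτ
      rw [Real.norm_eq_abs]
      have := inner_est 0 τ τ (fun s => muT c1 lam0 τ s * D τ s) (lam1 * c)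
        (mul_nonneg hlam1 hc) hτ.1.le (by linarith [hτ.1]) (by linarith [hτ.2]) ?_
      · linarith [this]
      · intro s hs
        rw [Set.uIoc_of_le hτ.1.le] at hs
        have hmem : (τ, s) ∈ Eset := mem_Eset hs.1.le (by linarith [hs.2, hτ.2]) hs.2
          (by linarith [hs.1, hs.2, hτ.2])
        calc |muT c1 lam0 τ s * D τ s| = |muT c1 lam0 τ s| * |D τ s| := abs_mul _ _
          _ ≤ lam1 * (c * (τ + s) ^ n) := by
              apply mul_le_mul (hmu _ _ hmem) (hDb _ _ hmem) (abs_nonneg _) hlam1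
          _ = lam1 * c * (τ + s) ^ n := by ring
    have := intervalIntegral.norm_integral_le_of_norm_le_const hpt
    rw [Real.norm_eq_abs] at this
    rw [abs_of_nonneg (by linarith : (0:ℝ) ≤ η - 0)] at this
    calc |∫ τ in (0:ℝ)..η, ∫ s in (0:ℝ)..τ, muT c1 lam0 τ s * D τ s|
        ≤ lam1 * c * R * (η - 0) := this
      _ = lam1 * (c * R) * η := by ring
  -- term 3
  have B3 : |∫ z in η..ξ, ∫ s in (0:ℝ)..η, ∫ τ in z..(z + η - s),
        f ((τ - s) / 2) (z - (τ + s) / 2) * D τ s|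
      ≤ fbar * (c * R) * η * (ξ - η) := by
    have hpt : ∀ z ∈ Set.uIoc η ξ, ‖∫ s in (0:ℝ)..η, ∫ τ in z..(z + η - s),
        f ((τ - s) / 2) (z - (τ + s) / 2) * D τ s‖ ≤ fbar * c * R * η := by
      intro z hz
      rw [Set.uIoc_of_le h2] at hz
      have hmid : ∀ s ∈ Set.uIoc (0:ℝ) η, ‖∫ τ in z..(z + η - s),
          f ((τ - s) / 2) (z - (τ + s) / 2) * D τ s‖ ≤ fbar * c * R := by
        intro s hs
        rw [Set.uIoc_of_le h0] at hs
        rw [Real.norm_eq_abs]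
        have := inner_est z (z + η - s) s
          (fun τ => f ((τ - s) / 2) (z - (τ + s) / 2) * D τ s) (fbar * c)
          (mul_nonneg hfbar0 hc) (by linarith [hs.2]) (by linarith [hz.1, hs.1.le])
          (by linarith [hz.2]) ?_
        · linarith [this]
        · intro τ hτ
          rw [Set.uIoc_of_le (by linarith [hs.2] : z ≤ z + η - s)] at hτ
          have hmem : (τ, s) ∈ Eset := mem_Eset hs.1.le (by linarith [hs.2])
            (by linarith [hτ.1, hz.1, hs.2]) (by linarith [hτ.2, hz.2])
          calc |f ((τ - s) / 2) (z - (τ + s) / 2) * D τ s|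
              = |f ((τ - s) / 2) (z - (τ + s) / 2)| * |D τ s| := abs_mul _ _
            _ ≤ fbar * (c * (τ + s) ^ n) := by
                apply mul_le_mul (hfb _ _) (hDb _ _ hmem) (abs_nonneg _) hfbar0
            _ = fbar * c * (s + τ) ^ n := by rw [add_comm s τ]; ring
      have := intervalIntegral.norm_integral_le_of_norm_le_const hmid
      rw [abs_of_nonneg (by linarith : (0:ℝ) ≤ η - 0)] at this
      calc ‖∫ s in (0:ℝ)..η, ∫ τ in z..(z + η - s),
            f ((τ - s) / 2) (z - (τ + s) / 2) * D τ s‖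
          ≤ fbar * c * R * (η - 0) := this
        _ = fbar * c * R * η := by ring
    have := intervalIntegral.norm_integral_le_of_norm_le_const hpt
    rw [Real.norm_eq_abs] at this
    rw [abs_of_nonneg (by linarith : (0:ℝ) ≤ ξ - η)] at this
    calc |∫ z in η..ξ, ∫ s in (0:ℝ)..η, ∫ τ in z..(z + η - s),
          f ((τ - s) / 2) (z - (τ + s) / 2) * D τ s|
        ≤ fbar * c * R * η * (ξ - η) := this
      _ = fbar * (c * R) * η * (ξ - η) := by ring
  -- term 4
  have B4 : |∫ z in (0:ℝ)..η, ∫ s in (0:ℝ)..z, ∫ τ in z..(2 * z - s),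
        f ((τ - s) / 2) (z - (τ + s) / 2) * D τ s|
      ≤ fbar * (c * R) * η * η := by
    have hpt : ∀ z ∈ Set.uIoc (0:ℝ) η, ‖∫ s in (0:ℝ)..z, ∫ τ in z..(2 * z - s),
        f ((τ - s) / 2) (z - (τ + s) / 2) * D τ s‖ ≤ fbar * c * R * η := by
      intro z hz
      rw [Set.uIoc_of_le h0] at hz
      have hmid : ∀ s ∈ Set.uIoc (0:ℝ) z, ‖∫ τ in z..(2 * z - s),
          f ((τ - s) / 2) (z - (τ + s) / 2) * D τ s‖ ≤ fbar * c * R := by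
        intro s hs
        rw [Set.uIoc_of_le hz.1.le] at hs
        rw [Real.norm_eq_abs]
        have := inner_est z (2 * z - s) s
          (fun τ => f ((τ - s) / 2) (z - (τ + s) / 2) * D τ s) (fbar * c)
          (mul_nonneg hfbar0 hc) (by linarith [hs.2]) (by linarith [hz.1, hs.1.le])
          (by linarith [hz.2, hs.1.le]) ?_
        · linarith [this]
        · intro τ hτ
          rw [Set.uIoc_of_le (by linarith [hs.2] : z ≤ 2 * z - s)] at hτ
          have hmem : (τ, s) ∈ Eset := mem_Eset hs.1.le (by linarith [hs.2, hz.2])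
            (by linarith [hτ.1, hs.2]) (by linarith [hτ.2, hz.2])
          calc |f ((τ - s) / 2) (z - (τ + s) / 2) * D τ s|
              = |f ((τ - s) / 2) (z - (τ + s) / 2)| * |D τ s| := abs_mul _ _
            _ ≤ fbar * (c * (τ + s) ^ n) := by
                apply mul_le_mul (hfb _ _) (hDb _ _ hmem) (abs_nonneg _) hfbar0
            _ = fbar * c * (s + τ) ^ n := by rw [add_comm s τ]; ring
      have := intervalIntegral.norm_integral_le_of_norm_le_const hmid
      rw [abs_of_nonneg (by linarith [hz.1] : (0:ℝ) ≤ z - 0)] at this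
      have hfcR : 0 ≤ fbar * c * R := mul_nonneg (mul_nonneg hfbar0 hc) hR0
      calc ‖∫ s in (0:ℝ)..z, ∫ τ in z..(2 * z - s),
            f ((τ - s) / 2) (z - (τ + s) / 2) * D τ s‖
          ≤ fbar * c * R * (z - 0) := this
        _ ≤ fbar * c * R * η := by nlinarith [hz.2, hz.1, hfcR]
    have := intervalIntegral.norm_integral_le_of_norm_le_const hpt
    rw [Real.norm_eq_abs] at this
    rw [abs_of_nonneg (by linarith : (0:ℝ) ≤ η - 0)] at this
    calc |∫ z in (0:ℝ)..η, ∫ s in (0:ℝ)..z, ∫ τ in z..(2 * z - s),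
          f ((τ - s) / 2) (z - (τ + s) / 2) * D τ s|
        ≤ fbar * c * R * η * (η - 0) := this
      _ = fbar * (c * R) * η * η := by ring
  -- combine
  have tri : ∀ a b cc d : ℝ, |a + b + cc + d| ≤ |a| + |b| + |cc| + |d| := by
    intro a b cc d
    calc |a + b + cc + d| ≤ |a + b + cc| + |d| := abs_add_le _ _
      _ ≤ (|a + b| + |cc|) + |d| := by linarith [abs_add_le (a + b) cc]
      _ ≤ |a| + |b| + |cc| + |d| := by linarith [abs_add_le a b]
  have final : lam1 * (c * R) * (ξ - η) / 4 + lam1 * (c * R) * η / 2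
      + fbar * (c * R) * η * (ξ - η) / 4 + fbar * (c * R) * η * η / 2
      ≤ (lam1 + fbar) / 2 * (c * R) := by
    nlinarith [mul_nonneg hlam1 hcR, mul_nonneg hfbar0 hcR,
      mul_nonneg (mul_nonneg hfbar0 hcR) h0,
      mul_nonneg (mul_nonneg (mul_nonneg hfbar0 hcR) h0) (by linarith : (0:ℝ) ≤ 2 - (ξ + η)),
      mul_nonneg (mul_nonneg (mul_nonneg hfbar0 hcR) (by linarith : (0:ℝ) ≤ 1 - η)) hxy0,
      mul_nonneg (mul_nonneg hlam1 hcR) (by linarith : (0:ℝ) ≤ 2 - (ξ + η))]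
  have habs : |PhiOp c1 lam0 f D ξ η|
      ≤ (1/4) * |∫ τ in η..ξ, ∫ s in (0:ℝ)..η, muT c1 lam0 τ s * D τ s|
        + (1/2) * |∫ τ in (0:ℝ)..η, ∫ s in (0:ℝ)..τ, muT c1 lam0 τ s * D τ s|
        + (1/4) * |∫ z in η..ξ, ∫ s in (0:ℝ)..η, ∫ τ in z..(z + η - s),
            f ((τ - s) / 2) (z - (τ + s) / 2) * D τ s|
        + (1/2) * |∫ z in (0:ℝ)..η, ∫ s in (0:ℝ)..z, ∫ τ in z..(2 * z - s),
            f ((τ - s) / 2) (z - (τ + s) / 2) * D τ s| := by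
    unfold PhiOp
    have := tri ((1 / 4) * (∫ τ in η..ξ, ∫ s in (0:ℝ)..η, muT c1 lam0 τ s * D τ s))
      ((1 / 2) * (∫ τ in (0:ℝ)..η, ∫ s in (0:ℝ)..τ, muT c1 lam0 τ s * D τ s))
      ((1 / 4) * (∫ z in η..ξ, ∫ s in (0:ℝ)..η, ∫ τ in z..(z + η - s),
          f ((τ - s) / 2) (z - (τ + s) / 2) * D τ s))
      ((1 / 2) * (∫ z in (0:ℝ)..η, ∫ s in (0:ℝ)..z, ∫ τ in z..(2 * z - s),
          f ((τ - s) / 2) (z - (τ + s) / 2) * D τ s))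
    simp only [abs_mul] at this
    rw [abs_of_nonneg (by norm_num : (0:ℝ) ≤ 1/4), abs_of_nonneg (by norm_num : (0:ℝ) ≤ 1/2)]
      at this
    exact this
  calc |PhiOp c1 lam0 f D ξ η| ≤ _ := habs
    _ ≤ (lam1 + fbar) / 2 * (c * R) := by linarith [B1, B2, B3, B4, final]
    _ = (lam1 + fbar) / 2 * (c * ((ξ + η) ^ (n + 1) / ((n : ℝ) + 1))) := by rw [hR]
    _ = (lam1 + fbar) / 2 * (c * (ξ + η) ^ (n + 1) / ((n : ℝ) + 1)) := by ring

theorem stmt16 (c1 : ℝ → ℝ) (lam0 : ℝ) (f : ℝ → ℝ → ℝ)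
    (hc1 : ContDiffOn ℝ 1 c1 (Set.Icc 0 1))
    (hfc : Continuous (fun q : ℝ × ℝ => f q.1 q.2))
    (hfbdd : ∃ C : ℝ, ∀ x y : ℝ, |f x y| ≤ C)
    -- a continuous solution `Ḡ` of the kernel integral equation
    (Gbar : ℝ → ℝ → ℝ)
    (hGbar_cont : ContinuousOn (fun q : ℝ × ℝ => Gbar q.1 q.2) Eset)
    (hGbar : ∀ ξ η : ℝ, (ξ, η) ∈ Eset →
      Gbar ξ η = Gzero lam0 f ξ η + PhiOp c1 lam0 f Gbar ξ η)
    -- the successive approximation sequence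
    (G : ℕ → ℝ → ℝ → ℝ)
    (hG0 : ∀ ξ η : ℝ, G 0 ξ η = Gzero lam0 f ξ η)
    (hGrec : ∀ n : ℕ, ∀ ξ η : ℝ, G (n + 1) ξ η = Gzero lam0 f ξ η + PhiOp c1 lam0 f (G n) ξ η)
    -- the constants
    (L fbar lam1 M : ℝ)
    (hL : L = sSup ((fun q : ℝ × ℝ => |PhiOp c1 lam0 f Gbar q.1 q.2|) '' Eset))
    (hfbar : fbar = sSup (Set.range fun q : ℝ × ℝ => |f q.1 q.2|))
    (hlam1 : lam1 = max |lam0|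
      (sSup ((fun q : ℝ × ℝ => |lam0 - c1 q.1 + c1 q.2|) '' (Set.Icc 0 1 ×ˢ Set.Icc 0 1))))
    (hM : M = (lam1 + fbar) / 2) :
    ∀ n : ℕ, ∀ ξ η : ℝ, (ξ, η) ∈ Eset →
      |G n ξ η - Gbar ξ η| ≤ L * M ^ n / (Nat.factorial n : ℝ) * (ξ + η) ^ n := by
  obtain ⟨C, hC⟩ := hfbdd
  -- basic topology of `Eset`
  have hEclosed : IsClosed Eset := by
    have : Eset = {q : ℝ × ℝ | 0 ≤ q.2} ∩ ({q | q.2 ≤ 1} ∩ ({q | q.2 ≤ q.1} ∩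
        {q | q.1 ≤ 2 - q.2})) := by
      ext q; simp only [Eset, Set.mem_setOf_eq, Set.mem_inter_iff]
    rw [this]
    exact (isClosed_le continuous_const continuous_snd).inter
      ((isClosed_le continuous_snd continuous_const).inter
        ((isClosed_le continuous_snd continuous_fst).inter
          (isClosed_le continuous_fst (continuous_const.sub continuous_snd))))
  have hEcomp : IsCompact Eset := by
    apply IsCompact.of_isClosed_subset (isCompact_Icc (a := ((0:ℝ), (0:ℝ)))
      (b := ((2:ℝ), (1:ℝ)))) hEclosed
    intro q hq
    have m0 : 0 ≤ q.2 := hq.1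
    have m1 : q.2 ≤ 1 := hq.2.1
    have m2 : q.2 ≤ q.1 := hq.2.2.1
    have m3 : q.1 ≤ 2 - q.2 := hq.2.2.2
    simp only [Set.mem_Icc, Prod.le_def]
    exact ⟨⟨by linarith, by linarith⟩, ⟨by linarith, by linarith⟩⟩
  have hEne : ((0:ℝ), (0:ℝ)) ∈ Eset := ⟨le_refl 0, by norm_num, le_refl 0, by norm_num⟩
  -- extend `c1` continuously
  have hc1c : ContinuousOn c1 (Set.Icc 0 1) := hc1.continuousOn
  obtain ⟨c1eC, hc1e_eq⟩ := ContinuousMap.exists_restrict_eq (Y := ℝ)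
    (isClosed_Icc : IsClosed (Set.Icc (0:ℝ) 1)) ⟨_, hc1c.restrict⟩
  set c1e : ℝ → ℝ := fun x => c1eC x with hc1edef
  have hc1ec : Continuous c1e := c1eC.continuous
  have hc1e : ∀ x ∈ Set.Icc (0:ℝ) 1, c1e x = c1 x := fun x hx =>
    ContinuousMap.congr_fun hc1e_eq ⟨x, hx⟩
  -- extend `Gbar` continuously
  obtain ⟨GbC, hGb_eq⟩ := ContinuousMap.exists_restrict_eq (Y := ℝ) hEclosed
    ⟨_, hGbar_cont.restrict⟩
  set Gext : ℝ → ℝ → ℝ := fun a b => GbC (a, b) with hGextdef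
  have hGextc : Continuous fun q : ℝ × ℝ => Gext q.1 q.2 := GbC.continuous
  have hGextEq : ∀ τ s : ℝ, (τ, s) ∈ Eset → Gext τ s = Gbar τ s := fun τ s h =>
    ContinuousMap.congr_fun hGb_eq ⟨(τ, s), h⟩
  -- bound for `f`
  have hfbar_le : ∀ x y : ℝ, |f x y| ≤ fbar := by
    intro x y
    rw [hfbar]
    have hb : BddAbove (Set.range fun q : ℝ × ℝ => |f q.1 q.2|) := by
      refine ⟨C, ?_⟩
      rintro v ⟨q, rfl⟩
      exact hC q.1 q.2
    exact le_csSup hb ⟨(x, y), rfl⟩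
  have hfbar0 : 0 ≤ fbar := le_trans (abs_nonneg _) (hfbar_le 0 0)
  -- bound for `muT`
  have hlam1_0 : 0 ≤ lam1 := le_trans (abs_nonneg lam0) (by rw [hlam1]; exact le_max_left _ _)
  have memIcc : ∀ τ s : ℝ, (τ, s) ∈ Eset →
      (τ + s) / 2 ∈ Set.Icc (0:ℝ) 1 ∧ (τ - s) / 2 ∈ Set.Icc (0:ℝ) 1 := by
    intro τ s hm
    have m0 : 0 ≤ s := hm.1
    have m1 : s ≤ 1 := hm.2.1
    have m2 : s ≤ τ := hm.2.2.1
    have m3 : τ ≤ 2 - s := hm.2.2.2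
    exact ⟨⟨by linarith, by linarith⟩, ⟨by linarith, by linarith⟩⟩
  have hmu_le_c1 : ∀ τ s : ℝ, (τ, s) ∈ Eset → |muT c1 lam0 τ s| ≤ lam1 := by
    intro τ s hm
    obtain ⟨hx, hy⟩ := memIcc τ s hm
    show |lam0 - c1 ((τ + s) / 2) + c1 ((τ - s) / 2)| ≤ lam1
    rw [hlam1]
    apply le_trans ?_ (le_max_right _ _)
    apply le_csSup
    · apply IsCompact.bddAbove_image (isCompact_Icc.prod isCompact_Icc)
      apply ContinuousOn.abs
      apply ContinuousOn.add
      · apply ContinuousOn.sub continuousOn_const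
        exact hc1c.comp continuousOn_fst (fun q hq => hq.1)
      · exact hc1c.comp continuousOn_snd (fun q hq => hq.2)
    · exact ⟨((τ + s) / 2, (τ - s) / 2), Set.mk_mem_prod hx hy, rfl⟩
  have hmuE : ∀ τ s : ℝ, (τ, s) ∈ Eset → muT c1e lam0 τ s = muT c1 lam0 τ s := by
    intro τ s hm
    obtain ⟨hx, hy⟩ := memIcc τ s hm
    unfold muT
    rw [hc1e _ hx, hc1e _ hy]
  have hmu_le : ∀ τ s : ℝ, (τ, s) ∈ Eset → |muT c1e lam0 τ s| ≤ lam1 := fun τ s h => by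
    rw [hmuE τ s h]; exact hmu_le_c1 τ s h
  -- `L` facts
  have hcongr_bar : ∀ ξ η : ℝ, (ξ, η) ∈ Eset →
      PhiOp c1 lam0 f Gbar ξ η = PhiOp c1e lam0 f Gext ξ η := by
    intro ξ η hq
    apply phi_congr ?_ ?_ hq
    · intro τ s hm
      rw [hmuE τ s hm, hGextEq τ s hm]
    · intro τ s hm
      exact (hGextEq τ s hm).symm
  have hLb : BddAbove ((fun q : ℝ × ℝ => |PhiOp c1 lam0 f Gbar q.1 q.2|) '' Eset) := by
    have himg : (fun q : ℝ × ℝ => |PhiOp c1 lam0 f Gbar q.1 q.2|) '' Eset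
        = (fun q : ℝ × ℝ => |PhiOp c1e lam0 f Gext q.1 q.2|) '' Eset := by
      apply Set.image_congr
      intro q hq
      rw [hcongr_bar q.1 q.2 hq]
    rw [himg]
    exact hEcomp.bddAbove_image (cont_PhiOp hc1ec lam0 hfc hGextc).abs.continuousOn
  have hLge : ∀ ξ η : ℝ, (ξ, η) ∈ Eset → |PhiOp c1 lam0 f Gbar ξ η| ≤ L := by
    intro ξ η hq
    rw [hL]
    exact le_csSup hLb ⟨(ξ, η), hq, rfl⟩
  have hL0 : 0 ≤ L := le_trans (abs_nonneg _) (hLge 0 0 hEne)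
  have hM0 : 0 ≤ M := by rw [hM]; linarith
  -- the strengthened induction
  suffices h : ∀ n : ℕ, (∃ Hn : ℝ → ℝ → ℝ, (Continuous fun q : ℝ × ℝ => Hn q.1 q.2) ∧
      ∀ ξ η : ℝ, (ξ, η) ∈ Eset → G n ξ η = Hn ξ η) ∧
      (∀ ξ η : ℝ, (ξ, η) ∈ Eset →
        |G n ξ η - Gbar ξ η| ≤ L * M ^ n / (Nat.factorial n : ℝ) * (ξ + η) ^ n) by
    intro n ξ η hq
    exact (h n).2 ξ η hq
  intro n
  induction n with
  | zero =>
    constructor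
    · exact ⟨Gzero lam0 f, cont_Gzero lam0 hfc, fun ξ η _ => hG0 ξ η⟩
    · intro ξ η hq
      rw [hG0 ξ η, hGbar ξ η hq]
      simp only [pow_zero, Nat.factorial_zero, Nat.cast_one, mul_one, div_one]
      have e : Gzero lam0 f ξ η - (Gzero lam0 f ξ η + PhiOp c1 lam0 f Gbar ξ η)
          = -(PhiOp c1 lam0 f Gbar ξ η) := by ring
      rw [e, abs_neg]
      exact hLge ξ η hq
  | succ n ih =>
    obtain ⟨⟨Hn, hHnc, hHne⟩, hbnd⟩ := ih
    have hcongr_n : ∀ ξ η : ℝ, (ξ, η) ∈ Eset →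
        PhiOp c1 lam0 f (G n) ξ η = PhiOp c1e lam0 f Hn ξ η := by
      intro ξ η hq
      apply phi_congr ?_ ?_ hq
      · intro τ s hm
        rw [hmuE τ s hm, hHne τ s hm]
      · exact hHne
    constructor
    · refine ⟨fun a b => Gzero lam0 f a b + PhiOp c1e lam0 f Hn a b,
        (cont_Gzero lam0 hfc).add (cont_PhiOp hc1ec lam0 hfc hHnc), ?_⟩
      intro ξ η hq
      rw [hGrec n ξ η]
      show Gzero lam0 f ξ η + PhiOp c1 lam0 f (G n) ξ η = _
      rw [hcongr_n ξ η hq]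
    · intro ξ η hq
      have e : G (n + 1) ξ η - Gbar ξ η
          = PhiOp c1e lam0 f (fun a b => Hn a b - Gext a b) ξ η := by
        rw [hGrec n ξ η, hGbar ξ η hq, hcongr_n ξ η hq, hcongr_bar ξ η hq]
        have := phi_sub hc1ec lam0 hfc hHnc hGextc ξ η
        linarith [this]
      rw [e]
      have hDb : ∀ τ s : ℝ, (τ, s) ∈ Eset →
          |Hn τ s - Gext τ s| ≤ (L * M ^ n / (Nat.factorial n : ℝ)) * (τ + s) ^ n := by
        intro τ s hm
        show |Hn τ s - Gext τ s| ≤ _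
        rw [← hHne τ s hm, hGextEq τ s hm]
        exact hbnd τ s hm
      have hfn0 : (0:ℝ) < (Nat.factorial n : ℝ) := by
        exact_mod_cast Nat.factorial_pos n
      have hc0 : 0 ≤ L * M ^ n / (Nat.factorial n : ℝ) :=
        div_nonneg (mul_nonneg hL0 (pow_nonneg hM0 n)) hfn0.le
      have hb := phi_bound hlam1_0 hfbar0 hmu_le hfbar_le n hc0 hDb hq
      calc |PhiOp c1e lam0 f (fun a b => Hn a b - Gext a b) ξ η|
          ≤ (lam1 + fbar) / 2 * (L * M ^ n / (Nat.factorial n : ℝ) * (ξ + η) ^ (n + 1)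
              / ((n : ℝ) + 1)) := hb
        _ = L * M ^ (n + 1) / (Nat.factorial (n + 1) : ℝ) * (ξ + η) ^ (n + 1) := by
            rw [hM, Nat.factorial_succ]
            push_cast
            field_simp
            ring
end

section
/- Let r ≥ 0 and λ₀ ∈ ℝ, and define the sequence G_n on E by G₀(ξ,η) := (λ₀/4)(ξ+η) and G_{n+1}(ξ,η) := (1/4)∫_η^ξ∫₀^η (λ₀ - rτs)G_n(τ,s) ds dτ + (1/2)∫₀^η∫₀^τ (λ₀ - rτs)G_n(τ,s) ds dτ. With M₁ := r + |λ₀|, for every n ∈ ℕ₀ and every (ξ,η) ∈ E one has |G_n(ξ,η)| ≤ (M₁^{n+1}/(n+1)!)·(ξ^{n+1}η^n + ξ^n η^{n+1}). -/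
open MeasureTheory intervalIntegral

lemma mem_Eset_iff (a b : ℝ) : (a, b) ∈ Eset ↔ (0 ≤ b ∧ b ≤ 1 ∧ b ≤ a ∧ a ≤ 2 - b) := Iff.rfl

lemma absInt_le {a b : ℝ} {f g : ℝ → ℝ} (hg : IntervalIntegrable g volume a b)
    (h : ∀ t ∈ Set.uIoc a b, |f t| ≤ g t) : |∫ t in a..b, f t| ≤ |∫ t in a..b, g t| := by
  simpa [Real.norm_eq_abs] using intervalIntegral.norm_integral_le_abs_of_norm_le
    (f := f) (μ := volume) (ae_restrict_of_forall_mem measurableSet_uIoc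
      (by simpa [Real.norm_eq_abs] using h)) hg

lemma integral_two_monomials (a b A B : ℝ) (k m : ℕ) :
    ∫ s in a..b, (A * s^k + B * s^m) =
      A*(b^(k+1)-a^(k+1))/((k:ℝ)+1) + B*(b^(m+1)-a^(m+1))/((m:ℝ)+1) := by
  rw [intervalIntegral.integral_add ((Continuous.intervalIntegrable (by fun_prop) a b))
    ((Continuous.intervalIntegrable (by fun_prop) a b)),
    intervalIntegral.integral_const_mul, intervalIntegral.integral_const_mul,
    integral_pow, integral_pow]
  ring

lemma keyabs (x y : ℝ) (hy : 0 ≤ y) (hxy : x = y) : |x| ≤ y := by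
  rw [hxy, abs_of_nonneg hy]

set_option maxHeartbeats 1600000 in
theorem stmt18 (r lam0 : ℝ) (hr : 0 ≤ r)
    (G : ℕ → ℝ → ℝ → ℝ)
    (hG0 : ∀ ξ η : ℝ, G 0 ξ η = lam0 / 4 * (ξ + η))
    (hGrec : ∀ n : ℕ, ∀ ξ η : ℝ, G (n + 1) ξ η =
      (1 / 4) * (∫ τ in η..ξ, ∫ s in (0:ℝ)..η, (lam0 - r * τ * s) * G n τ s)
        + (1 / 2) * (∫ τ in (0:ℝ)..η, ∫ s in (0:ℝ)..τ, (lam0 - r * τ * s) * G n τ s))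
    (M₁ : ℝ) (hM₁ : M₁ = r + |lam0|) :
    ∀ n : ℕ, ∀ ξ η : ℝ, (ξ, η) ∈ Eset →
      |G n ξ η| ≤ M₁ ^ (n + 1) / (Nat.factorial (n + 1) : ℝ) *
        (ξ ^ (n + 1) * η ^ n + ξ ^ n * η ^ (n + 1)) := by
  have hM0 : 0 ≤ M₁ := by rw [hM₁]; positivity
  have hlam : |lam0| ≤ M₁ := by rw [hM₁]; linarith
  intro n
  induction n with
  | zero =>
    intro ξ η hE
    obtain ⟨hη0, hη1, hηξ, hξ⟩ := (mem_Eset_iff ξ η).mp hE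
    rw [hG0]
    have h1 : |lam0 / 4 * (ξ + η)| = |lam0| / 4 * (ξ + η) := by
      rw [abs_mul, abs_div, abs_of_nonneg (by linarith : (0:ℝ) ≤ ξ + η)]
      norm_num
    rw [h1]
    norm_num [Nat.factorial]
    nlinarith [abs_nonneg lam0, mul_nonneg (sub_nonneg.mpr hlam) (by linarith : (0:ℝ) ≤ ξ + η)]
  | succ n ih =>
    intro ξ η hE
    obtain ⟨hη0, hη1, hηξ, hξ2⟩ := (mem_Eset_iff ξ η).mp hE
    have hξ0 : (0:ℝ) ≤ ξ := le_trans hη0 hηξ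
    have hF0 : (0:ℝ) < (Nat.factorial (n+1) : ℝ) := by exact_mod_cast Nat.factorial_pos _
    set F : ℝ := (Nat.factorial (n+1) : ℝ) with hF
    set c : ℝ := M₁^(n+2)/F with hcdef
    have hc : 0 ≤ c := by rw [hcdef]; exact div_nonneg (pow_nonneg hM0 _) hF0.le
    clear_value F c
    have hn1 : (0:ℝ) < (n:ℝ)+1 := by positivity
    have hn2 : (0:ℝ) < (n:ℝ)+2 := by positivity
    have hn3 : (0:ℝ) < 2*(n:ℝ)+3 := by positivity
    have h0 : (0:ℝ)^(n+1) = 0 := zero_pow (by omega)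
    have h0' : (0:ℝ)^(n+2) = 0 := zero_pow (by omega)
    have h0'' : (0:ℝ)^(2*n+2+1) = 0 := zero_pow (by omega)
    -- pointwise bound on the integrand, on Eset
    have hpt : ∀ τ s : ℝ, (τ, s) ∈ Eset →
        |(lam0 - r*τ*s) * G n τ s| ≤ c * τ^(n+1)*s^n + c * τ^n*s^(n+1) := by
      intro τ s hts
      obtain ⟨hs0, hs1, hsτ, hτ2⟩ := (mem_Eset_iff τ s).mp hts
      have hτ0 : (0:ℝ) ≤ τ := le_trans hs0 hsτ
      have hts1 : τ * s ≤ 1 := by nlinarith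
      have h1 : |lam0 - r*τ*s| ≤ M₁ := by
        have h2 := abs_sub lam0 (r*τ*s)
        rw [abs_of_nonneg (by positivity : (0:ℝ) ≤ r*τ*s)] at h2
        nlinarith
      have h2 := ih τ s hts
      calc |(lam0 - r*τ*s) * G n τ s| = |lam0 - r*τ*s| * |G n τ s| := abs_mul _ _
        _ ≤ M₁ * (M₁ ^ (n + 1) / F * (τ ^ (n + 1) * s ^ n + τ ^ n * s ^ (n + 1))) :=
            mul_le_mul h1 h2 (abs_nonneg _) hM0
        _ = c * τ^(n+1)*s^n + c * τ^n*s^(n+1) := by rw [hcdef]; ring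
    have hpow : ∀ k : ℕ, η^(k+1) ≤ ξ^(k+1) := fun k => pow_le_pow_left₀ hη0 hηξ _
    set A₁ : ℝ := c*η^(n+2)/((n:ℝ)+2) with hA₁
    set B₁ : ℝ := c*η^(n+1)/((n:ℝ)+1) with hB₁
    have hA₁0 : 0 ≤ A₁ := by
      rw [hA₁]; exact div_nonneg (mul_nonneg hc (pow_nonneg hη0 _)) hn2.le
    have hB₁0 : 0 ≤ B₁ := by
      rw [hB₁]; exact div_nonneg (mul_nonneg hc (pow_nonneg hη0 _)) hn1.le
    clear_value A₁ B₁
    -- inner bound, first integral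
    have hinner1 : ∀ τ ∈ Set.uIoc η ξ,
        |∫ s in (0:ℝ)..η, (lam0 - r*τ*s) * G n τ s| ≤ A₁*τ^n + B₁*τ^(n+1) := by
      intro τ hτ
      rw [Set.uIoc_of_le hηξ] at hτ
      obtain ⟨hτl, hτr⟩ := hτ
      have hτ0 : (0:ℝ) ≤ τ := le_trans hη0 (le_of_lt hτl)
      have hb := absInt_le (a := 0) (b := η)
        (f := fun s => (lam0 - r*τ*s) * G n τ s)
        (g := fun s => (c*τ^(n+1)) * s^n + (c*τ^n) * s^(n+1))
        (Continuous.intervalIntegrable (by fun_prop) _ _) ?_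
      · rw [integral_two_monomials] at hb
        refine le_trans hb (keyabs _ _ ?_ ?_)
        · exact add_nonneg (mul_nonneg hA₁0 (pow_nonneg hτ0 _))
            (mul_nonneg hB₁0 (pow_nonneg hτ0 _))
        · rw [h0, h0', hA₁, hB₁]
          push_cast
          ring
      · intro s hs
        rw [Set.uIoc_of_le hη0] at hs
        obtain ⟨hsl, hsr⟩ := hs
        have hmem : (τ, s) ∈ Eset := (mem_Eset_iff τ s).mpr
          ⟨le_of_lt hsl, le_trans hsr hη1, le_trans hsr (le_of_lt hτl), by linarith⟩
        exact le_trans (hpt τ s hmem) (le_of_eq (by ring))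
    -- bound the first double integral
    have hAbound : |∫ τ in η..ξ, ∫ s in (0:ℝ)..η, (lam0 - r*τ*s) * G n τ s| ≤
        A₁*(ξ^(n+1)-η^(n+1))/((n:ℝ)+1) + B₁*(ξ^(n+2)-η^(n+2))/((n:ℝ)+2) := by
      have hb := absInt_le (a := η) (b := ξ)
        (f := fun τ => ∫ s in (0:ℝ)..η, (lam0 - r*τ*s) * G n τ s)
        (g := fun τ => A₁*τ^n + B₁*τ^(n+1))
        (Continuous.intervalIntegrable (by fun_prop) _ _) hinner1
      rw [integral_two_monomials] at hb
      refine le_trans hb (keyabs _ _ ?_ ?_)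
      · exact add_nonneg
          (div_nonneg (mul_nonneg hA₁0 (sub_nonneg.mpr (hpow n))) hn1.le)
          (div_nonneg (mul_nonneg hB₁0 (sub_nonneg.mpr (hpow (n+1)))) hn2.le)
      · push_cast
        ring
    -- inner bound, second integral
    set D : ℝ := c/((n:ℝ)+1) + c/((n:ℝ)+2) with hD
    have hD0 : 0 ≤ D := by
      rw [hD]; exact add_nonneg (div_nonneg hc hn1.le) (div_nonneg hc hn2.le)
    clear_value D
    have hinner2 : ∀ τ ∈ Set.uIoc (0:ℝ) η,
        |∫ s in (0:ℝ)..τ, (lam0 - r*τ*s) * G n τ s| ≤ D*τ^(2*n+2) := by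
      intro τ hτ
      rw [Set.uIoc_of_le hη0] at hτ
      obtain ⟨hτl, hτr⟩ := hτ
      have hτ0 : (0:ℝ) ≤ τ := le_of_lt hτl
      have hb := absInt_le (a := 0) (b := τ)
        (f := fun s => (lam0 - r*τ*s) * G n τ s)
        (g := fun s => (c*τ^(n+1)) * s^n + (c*τ^n) * s^(n+1))
        (Continuous.intervalIntegrable (by fun_prop) _ _) ?_
      · rw [integral_two_monomials] at hb
        refine le_trans hb (keyabs _ _ (mul_nonneg hD0 (pow_nonneg hτ0 _)) ?_)
        rw [h0, h0', hD]
        push_cast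
        field_simp
        ring
      · intro s hs
        rw [Set.uIoc_of_le hτ0] at hs
        obtain ⟨hsl, hsr⟩ := hs
        have hmem : (τ, s) ∈ Eset := (mem_Eset_iff τ s).mpr
          ⟨le_of_lt hsl, le_trans hsr (le_trans hτr hη1), hsr, by nlinarith⟩
        exact le_trans (hpt τ s hmem) (le_of_eq (by ring))
    -- bound the second double integral
    have hBbound : |∫ τ in (0:ℝ)..η, ∫ s in (0:ℝ)..τ, (lam0 - r*τ*s) * G n τ s| ≤
        D*η^(2*n+3)/(2*(n:ℝ)+3) := by
      have hb := absInt_le (a := 0) (b := η)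
        (f := fun τ => ∫ s in (0:ℝ)..τ, (lam0 - r*τ*s) * G n τ s)
        (g := fun τ => D*τ^(2*n+2))
        (Continuous.intervalIntegrable (by fun_prop) _ _) hinner2
      rw [intervalIntegral.integral_const_mul, integral_pow, h0''] at hb
      refine le_trans hb (keyabs _ _ ?_ ?_)
      · exact div_nonneg (mul_nonneg hD0 (pow_nonneg hη0 _)) hn3.le
      · push_cast
        ring
    -- combine
    rw [hGrec]
    have habs : |1 / 4 * (∫ τ in η..ξ, ∫ s in (0:ℝ)..η, (lam0 - r * τ * s) * G n τ s)
        + 1 / 2 * (∫ τ in (0:ℝ)..η, ∫ s in (0:ℝ)..τ, (lam0 - r * τ * s) * G n τ s)| ≤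
        1/4 * (A₁*(ξ^(n+1)-η^(n+1))/((n:ℝ)+1) + B₁*(ξ^(n+2)-η^(n+2))/((n:ℝ)+2))
        + 1/2 * (D*η^(2*n+3)/(2*(n:ℝ)+3)) := by
      refine le_trans (abs_add_le _ _) ?_
      rw [abs_mul, abs_mul, (by norm_num : |(1:ℝ)/4| = 1/4), (by norm_num : |(1:ℝ)/2| = 1/2)]
      exact add_le_add (mul_le_mul_of_nonneg_left hAbound (by norm_num))
        (mul_le_mul_of_nonneg_left hBbound (by norm_num))
    refine le_trans habs ?_
    -- final algebra
    have hfac : (Nat.factorial (n+1+1) : ℝ) = ((n:ℝ)+2) * F := by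
      rw [hF, Nat.factorial_succ]
      push_cast
      ring
    rw [hfac]
    have e1 : ((n:ℝ)+1) ≠ 0 := hn1.ne'
    have e2 : ((n:ℝ)+2) ≠ 0 := hn2.ne'
    have e3 : (2*(n:ℝ)+3) ≠ 0 := hn3.ne'
    have hLHS : 1/4 * (A₁*(ξ^(n+1)-η^(n+1))/((n:ℝ)+1) + B₁*(ξ^(n+2)-η^(n+2))/((n:ℝ)+2))
        + 1/2 * (D*η^(2*n+3)/(2*(n:ℝ)+3))
        = c/(4*(((n:ℝ)+1)*((n:ℝ)+2))) * (ξ^(n+2)*η^(n+1) + ξ^(n+1)*η^(n+2)) := by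
      rw [hA₁, hB₁, hD]
      rw [show η^(2*n+3) = η^(n+2)*η^(n+1) by ring]
      field_simp
      ring
    rw [hLHS]
    have hPQ : (0:ℝ) ≤ ξ^(n+2)*η^(n+1) + ξ^(n+1)*η^(n+2) :=
      add_nonneg (mul_nonneg (pow_nonneg hξ0 _) (pow_nonneg hη0 _))
        (mul_nonneg (pow_nonneg hξ0 _) (pow_nonneg hη0 _))
    have hcoef : c/(4*(((n:ℝ)+1)*((n:ℝ)+2))) ≤ M₁^(n+1+1) / (((n:ℝ)+2) * F) := by
      rw [hcdef, div_div, show n+1+1 = n+2 from rfl, div_eq_mul_inv, div_eq_mul_inv]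
      refine mul_le_mul_of_nonneg_left ?_ (pow_nonneg hM0 _)
      refine inv_anti₀ (mul_pos hn2 hF0) ?_
      have hx : (0:ℝ) ≤ F*(((n:ℝ)+2)*(4*(n:ℝ)+3)) :=
        mul_nonneg hF0.le (mul_nonneg hn2.le (by positivity))
      have hy : F*(4*(((n:ℝ)+1)*((n:ℝ)+2))) = ((n:ℝ)+2)*F + F*(((n:ℝ)+2)*(4*(n:ℝ)+3)) := by
        ring
      linarith
    calc c/(4*(((n:ℝ)+1)*((n:ℝ)+2))) * (ξ^(n+2)*η^(n+1) + ξ^(n+1)*η^(n+2))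
        ≤ M₁^(n+1+1) / (((n:ℝ)+2) * F) * (ξ^(n+2)*η^(n+1) + ξ^(n+1)*η^(n+2)) :=
          mul_le_mul_of_nonneg_right hcoef hPQ
      _ = M₁ ^ (n+1+1) / (((n:ℝ)+2) * F) * (ξ ^ (n+1+1) * η ^ (n+1) + ξ ^ (n+1) * η ^ (n+1+1)) := by norm_num
end
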